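/- For every guarded k-labeled incidence graph L ∈ GLI^k, the underlying incidence graph I_L belongs to IEHW_k, i.e., I_L has an entangled hypertree decomposition of width at most k. -/

import Mathlib

set_option autoImplicit false

noncomputable section

/-! ### Incidence graphs -/

/-- An incidence graph: finite sets of red nodes and blue nodes (realised as two
disjoint finite types), edges from blue nodes to red nodes, every red node adjacent
to at least one blue node. -/
structure IncGraph where
  R : Type
  B : Type
  [finR : Finite R]
  [finB : Finite B]
  E : B → R → Prop
  covered : ∀ v : R, ∃ e : B, E e v

attribute [instance] IncGraph.finR IncGraph.finB

/-- The neighbourhood of a blue node. -/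
def IncGraph.nbhd (I : IncGraph) (e : I.B) : Set I.R := {v | I.E e v}

/-- Homomorphisms between incidence graphs. -/
def IncHom (J I : IncGraph) : Type :=
  {h : (J.R → I.R) × (J.B → I.B) // ∀ e v, J.E e v → I.E (h.2 e) (h.1 v)}

/-- The number of homomorphisms between incidence graphs. -/
def homCount (J I : IncGraph) : ℕ := Nat.card (IncHom J I)

/-- Homomorphism indistinguishability over a class of incidence graphs. -/
def HomIndist (C : Set IncGraph) (I I' : IncGraph) : Prop :=
  ∀ J ∈ C, homCount J I = homCount J I'

/-- Isomorphism of incidence graphs. -/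
def IncIso (I I' : IncGraph) : Prop :=
  ∃ (πR : I.R ≃ I'.R) (πB : I.B ≃ I'.B), ∀ e v, I.E e v ↔ I'.E (πB e) (πR v)

/-! ### Hypergraphs -/

structure HGraph where
  V : Type
  Edge : Type
  [finV : Finite V]
  [finE : Finite Edge]
  f : Edge → Set V
  covered : ∀ v : V, ∃ e : Edge, v ∈ f e

attribute [instance] HGraph.finV HGraph.finE

/-- A hypergraph is simple if its incidence function is injective. -/
def HGraph.Simple (H : HGraph) : Prop := Function.Injective H.f

/-- The incidence graph of a hypergraph. -/
def HGraph.inc (H : HGraph) : IncGraph where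
  R := H.V
  B := H.Edge
  E := fun e v => v ∈ H.f e
  covered := H.covered

/-- Homomorphisms between hypergraphs. -/
def HypHom (F H : HGraph) : Type :=
  {h : (F.V → H.V) × (F.Edge → H.Edge) // ∀ e, H.f (h.2 e) = h.1 '' F.f e}

/-- The number of homomorphisms between hypergraphs. -/
def hhomCount (F H : HGraph) : ℕ := Nat.card (HypHom F H)

/-- Homomorphism indistinguishability over a class of hypergraphs. -/
def HypHomIndist (C : Set HGraph) (H H' : HGraph) : Prop :=
  ∀ F ∈ C, hhomCount F H = hhomCount F H'

/-! ### Hypertree decompositions -/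

/-- A complete generalised hypertree decomposition of an incidence graph. -/
structure GHD (I : IncGraph) where
  T : Type
  [finT : Finite T]
  tr : SimpleGraph T
  isTree : tr.IsTree
  Bag : T → Set I.R
  Cover : T → Set I.B
  complete : ∀ e : I.B, ∃ t, I.nbhd e ⊆ Bag t ∧ e ∈ Cover t
  connR : ∀ v : I.R, (tr.induce {t | v ∈ Bag t}).Connected
  covering : ∀ t, Bag t ⊆ ⋃ e ∈ Cover t, I.nbhd e

attribute [instance] GHD.finT

/-- The decomposition has width at most `k`. -/
def GHD.widthLe {I : IncGraph} (D : GHD I) (k : ℕ) : Prop :=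
  ∀ t, (D.Cover t).ncard ≤ k

/-- An entangled hypertree decomposition. -/
structure EHD (I : IncGraph) extends GHD I where
  precise : ∀ t, (⋃ e ∈ Cover t, I.nbhd e) = Bag t
  connB : ∀ e : I.B, (tr.induce {t | e ∈ Cover t}).Connected

/-- Incidence graphs of generalised hypertree width at most `k`. -/
def IGHW (k : ℕ) : Set IncGraph := {I | ∃ D : GHD I, D.widthLe k}

/-- Incidence graphs of entangled hypertree width at most `k`. -/
def IEHW (k : ℕ) : Set IncGraph := {I | ∃ D : EHD I, D.toGHD.widthLe k}

/-- Hypergraphs of generalised hypertree width at most `k`. -/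
def GHWclass (k : ℕ) : Set HGraph := {H | H.inc ∈ IGHW k}

/-- Simple hypergraphs of generalised hypertree width at most `k`. -/
def SGHWclass (k : ℕ) : Set HGraph := {H | H.Simple ∧ H.inc ∈ IGHW k}

/-- Adding `n` fresh blue nodes whose neighbourhood is exactly `s`. -/
def IncGraph.addBlue (J : IncGraph) (s : Set J.R) (n : ℕ) : IncGraph where
  R := J.R
  B := J.B ⊕ Fin n
  E := fun e v => Sum.elim (fun e₁ => J.E e₁ v) (fun _ => v ∈ s) e
  covered := fun v => by
    obtain ⟨e, he⟩ := J.covered v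
    exact ⟨Sum.inl e, he⟩

/-! ### Guard functions -/

/-- A guard function: a partial map from red-variable indices to `[k]`
with finite domain. -/
structure GuardF (k : ℕ) where
  f : ℕ → Option (Fin k)
  fin : {i | (f i).isSome}.Finite

namespace GuardF

variable {k : ℕ}

/-- The domain of a guard function. -/
def dom (g : GuardF k) : Finset ℕ := g.fin.toFinset

open Classical in
/-- The image of a guard function. -/
def img (g : GuardF k) : Finset (Fin k) :=
  Finset.univ.filter fun j => ∃ i, g.f i = some j

theorem mem_dom {g : GuardF k} {i : ℕ} : i ∈ g.dom ↔ (g.f i).isSome := by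
  simp [dom, Set.Finite.mem_toFinset]

theorem mem_img {g : GuardF k} {j : Fin k} : j ∈ g.img ↔ ∃ i, g.f i = some j := by
  classical
  simp [img]

/-- Union of two guard functions (the first takes precedence). -/
def union (g₁ g₂ : GuardF k) : GuardF k where
  f := fun i => (g₁.f i).or (g₂.f i)
  fin := by
    apply (g₁.fin.union g₂.fin).subset
    intro i hi
    simp only [Set.mem_setOf_eq, Option.isSome_or, Bool.or_eq_true] at hi
    exact hi

/-- Removing a set of indices from the domain of a guard function. -/
def remove (g : GuardF k) (s : Finset ℕ) : GuardF k where
  f := fun i => if i ∈ s then none else g.f i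
  fin := by
    apply g.fin.subset
    intro i hi
    simp only [Set.mem_setOf_eq] at hi ⊢
    by_cases h : i ∈ s
    · simp [h] at hi
    · simpa [h] using hi

/-- Two guard functions are compatible if they agree on the intersection
of their domains. -/
def Compatible (g₁ g₂ : GuardF k) : Prop :=
  ∀ i j₁ j₂, g₁.f i = some j₁ → g₂.f i = some j₂ → j₁ = j₂

/-- `f` is a transition for `g`. -/
def IsTransition (g f : GuardF k) : Prop :=
  f.dom.Nonempty ∧ (∀ i, (f.f i).isSome → (g.f i).isSome) ∧
    ∀ i j, g.f i = some j → j ∈ f.img → (f.f i).isSome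

/-- `g ⊆ g'` for guard functions. -/
def le (g g' : GuardF k) : Prop := ∀ i j, g.f i = some j → g'.f i = some j

end GuardF

/-! ### The logic GC^k -/

/-- Raw syntax of the two-sorted counting logic with guards. Quantifiers carry
the guard function used to guard the quantified formula. -/
inductive Fml (k : ℕ) : Type where
  | top : Fml k
  | E (j : Fin k) (i : ℕ) : Fml k
  | beq (j j' : Fin k) : Fml k
  | req (i i' : ℕ) : Fml k
  | not (ψ : Fml k) : Fml k
  | and (ψ₁ ψ₂ : Fml k) : Fml k
  | exR (n : ℕ) (s : Finset ℕ) (g : GuardF k) (ψ : Fml k) : Fml k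
  | exB (n : ℕ) (s : Finset (Fin k)) (g : GuardF k) (ψ : Fml k) : Fml k

/-- Indices of free red variables of a formula.  For the quantified formulas the
quantified body is `(α_g ∧ ψ)`. -/
def freeR {k : ℕ} : Fml k → Finset ℕ
  | .top => ∅
  | .E _ i => {i}
  | .beq _ _ => ∅
  | .req i i' => {i, i'}
  | .not ψ => freeR ψ
  | .and ψ₁ ψ₂ => freeR ψ₁ ∪ freeR ψ₂
  | .exR _ s g ψ => (g.dom ∪ freeR ψ) \ s
  | .exB _ _ g ψ => g.dom ∪ freeR ψ

/-- Indices of free blue variables of a formula. -/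
def freeB {k : ℕ} : Fml k → Finset (Fin k)
  | .top => ∅
  | .E j _ => {j}
  | .beq j j' => {j, j'}
  | .req _ _ => ∅
  | .not ψ => freeB ψ
  | .and ψ₁ ψ₂ => freeB ψ₁ ∪ freeB ψ₂
  | .exR _ _ g ψ => g.img ∪ freeB ψ
  | .exB _ s g ψ => (g.img ∪ freeB ψ) \ s

/-- Updating a red assignment on the variables in `s`. -/
def updR {R : Type} (βR : ℕ → R) (s : Finset ℕ) (a : ↥s → R) : ℕ → R :=
  fun i => if h : i ∈ s then a ⟨i, h⟩ else βR i

/-- Updating a blue assignment on the variables in `s`. -/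
def updB {k : ℕ} {B : Type} (βB : Fin k → B) (s : Finset (Fin k)) (a : ↥s → B) : Fin k → B :=
  fun j => if h : j ∈ s then a ⟨j, h⟩ else βB j

/-- Satisfaction of the guard formula `α_g` in an interpretation. -/
def GuardSat {k : ℕ} (I : IncGraph) (βB : Fin k → I.B) (βR : ℕ → I.R) (g : GuardF k) : Prop :=
  ∀ i j, g.f i = some j → I.E (βB j) (βR i)

/-- Satisfaction of a formula in an interpretation `(I, β)`. -/
def FmlSat {k : ℕ} (I : IncGraph) : Fml k → (Fin k → I.B) → (ℕ → I.R) → Prop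
  | Fml.top, _, _ => True
  | Fml.E j i, βB, βR => I.E (βB j) (βR i)
  | Fml.beq j j', βB, _ => βB j = βB j'
  | Fml.req i i', _, βR => βR i = βR i'
  | Fml.not ψ, βB, βR => ¬ FmlSat I ψ βB βR
  | Fml.and ψ₁ ψ₂, βB, βR => FmlSat I ψ₁ βB βR ∧ FmlSat I ψ₂ βB βR
  | Fml.exR n s g ψ, βB, βR =>
      n ≤ Nat.card {a : ↥s → I.R //
        GuardSat I βB (updR βR s a) g ∧ FmlSat I ψ βB (updR βR s a)}
  | Fml.exB n s g ψ, βB, βR =>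
      n ≤ Nat.card {a : ↥s → I.B //
        GuardSat I (updB βB s a) βR g ∧ FmlSat I ψ (updB βB s a) βR}

/-- The formulas of the logic `GC^k`. -/
inductive IsGC (k : ℕ) : Fml k → Prop
  | top : IsGC k Fml.top
  | E (j : Fin k) (i : ℕ) : IsGC k (Fml.E j i)
  | beq (j j' : Fin k) : IsGC k (Fml.beq j j')
  | req (i i' : ℕ) : IsGC k (Fml.req i i')
  | not {ψ : Fml k} : IsGC k ψ → IsGC k ψ.not
  | and {ψ₁ ψ₂ : Fml k} : IsGC k ψ₁ → IsGC k ψ₂ → IsGC k (ψ₁.and ψ₂)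
  | exR {ψ : Fml k} (n : ℕ) (s : Finset ℕ) (g : GuardF k) :
      IsGC k ψ → g.dom = freeR ψ → 1 ≤ n → s.Nonempty → s ⊆ g.dom →
      IsGC k (Fml.exR n s g ψ)
  | exB {ψ : Fml k} (n : ℕ) (s : Finset (Fin k)) (g : GuardF k) :
      IsGC k ψ → g.dom = freeR ψ → 1 ≤ n → s.Nonempty → s ⊆ g.img ∪ freeB ψ →
      IsGC k (Fml.exB n s g ψ)

/-- The normal form `NGC^k`: `NGC k g ψ` expresses that `(α_g ∧ ψ)` is a formula
of the fragment `NGC^k`. -/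
inductive NGC (k : ℕ) : GuardF k → Fml k → Prop
  | E {g : GuardF k} (j : Fin k) (i : ℕ) : g.dom = {i} → NGC k g (Fml.E j i)
  | beq {g : GuardF k} (j j' : Fin k) : g.dom = ∅ → NGC k g (Fml.beq j j')
  | req {g : GuardF k} (i i' : ℕ) : g.dom = {i, i'} → NGC k g (Fml.req i i')
  | not {g : GuardF k} {ψ : Fml k} : NGC k g ψ → NGC k g ψ.not
  | and {g₁ g₂ : GuardF k} {ψ₁ ψ₂ : Fml k} :
      NGC k g₁ ψ₁ → NGC k g₂ ψ₂ → GuardF.Compatible g₁ g₂ →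
      NGC k (g₁.union g₂) (ψ₁.and ψ₂)
  | exR {g : GuardF k} {ψ : Fml k} (n : ℕ) (s : Finset ℕ) :
      NGC k g ψ → 1 ≤ n → s.Nonempty → s ⊆ g.dom →
      NGC k (g.remove s) (Fml.exR n s g ψ)
  | exB {g g' : GuardF k} {ψ : Fml k} (n : ℕ) (s : Finset (Fin k)) :
      NGC k g ψ → 1 ≤ n → s.Nonempty → s ⊆ g.img ∪ freeB ψ →
      g'.dom = g.dom →
      (∀ i ∈ g.dom, ∃ j, g'.f i = some j ∧ (g.f i = some j ∨ j ∈ s ∨ j ∉ g.img)) →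
      NGC k g' (Fml.exB n s g ψ)

/-- Indistinguishability of two incidence graphs by sentences of `GC^k`. -/
def GCEquiv (k : ℕ) (I I' : IncGraph) : Prop :=
  ∀ φ : Fml k, IsGC k φ → freeR φ = ∅ → freeB φ = ∅ →
    ((∀ βB βR, FmlSat I φ βB βR) ↔ (∀ βB βR, FmlSat I' φ βB βR))

/-! ### k-labeled incidence graphs -/

/-- A `k`-labeled incidence graph. -/
structure KLI (k : ℕ) where
  I : IncGraph
  r : ℕ → Option I.R
  b : Fin k → Option I.B
  g : GuardF k
  fin_r : {i | (r i).isSome}.Finite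

namespace KLI

variable {k : ℕ}

/-- The set of red labels used. -/
def domR (L : KLI k) : Finset ℕ := L.fin_r.toFinset

/-- The set of blue labels used. -/
def domB (L : KLI k) : Finset (Fin k) := Finset.univ.filter fun j => (L.b j).isSome

/-- `L` has real guards with respect to the partial map `f`. -/
def realGuardsWrt (L : KLI k) (f : ℕ → Option (Fin k)) : Prop :=
  ∀ i j, f i = some j → ∃ v e, L.r i = some v ∧ L.b j = some e ∧ L.I.E e v

/-- `L` has real guards. -/
def realGuards (L : KLI k) : Prop := L.realGuardsWrt L.g.f

/-- Removing red labels. -/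
def removeR (L : KLI k) (X : Finset ℕ) : KLI k where
  I := L.I
  r := fun i => if i ∈ X then none else L.r i
  b := L.b
  g := L.g.remove X
  fin_r := by
    apply L.fin_r.subset
    intro i hi
    simp only [Set.mem_setOf_eq] at hi ⊢
    by_cases h : i ∈ X
    · simp [h] at hi
    · simpa [h] using hi

/-- Removing blue labels. -/
def removeB (L : KLI k) (X : Finset (Fin k)) : KLI k where
  I := L.I
  r := L.r
  b := fun j => if j ∈ X then none else L.b j
  g := L.g
  fin_r := L.fin_r

/-- Moving the red labels in `X` onto the nodes given by `a`. -/
def reseatR (L : KLI k) (X : Finset ℕ) (a : ↥X → L.I.R) : KLI k where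
  I := L.I
  r := fun i => if h : i ∈ X then some (a ⟨i, h⟩) else L.r i
  b := L.b
  g := L.g
  fin_r := by
    apply (L.fin_r.union X.finite_toSet).subset
    intro i hi
    simp only [Set.mem_setOf_eq] at hi
    by_cases h : i ∈ X
    · exact Or.inr (by simpa using h)
    · exact Or.inl (by simpa [h] using hi)

/-- Moving the blue labels in `X` onto the nodes given by `a`. -/
def reseatB (L : KLI k) (X : Finset (Fin k)) (a : ↥X → L.I.B) : KLI k where
  I := L.I
  r := L.r
  b := fun j => if h : j ∈ X then some (a ⟨j, h⟩) else L.b j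
  g := L.g
  fin_r := L.fin_r

/-- The identifications of red nodes when glueing. -/
def glueRelR (L₁ L₂ : KLI k) : (L₁.I.R ⊕ L₂.I.R) → (L₁.I.R ⊕ L₂.I.R) → Prop :=
  fun x y => ∃ i v₁ v₂, L₁.r i = some v₁ ∧ L₂.r i = some v₂ ∧ x = Sum.inl v₁ ∧ y = Sum.inr v₂

/-- The identifications of blue nodes when glueing. -/
def glueRelB (L₁ L₂ : KLI k) : (L₁.I.B ⊕ L₂.I.B) → (L₁.I.B ⊕ L₂.I.B) → Prop :=
  fun x y => ∃ j e₁ e₂, L₁.b j = some e₁ ∧ L₂.b j = some e₂ ∧ x = Sum.inl e₁ ∧ y = Sum.inr e₂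

/-- The incidence graph underlying the glueing of two labeled incidence graphs. -/
def glueIG (L₁ L₂ : KLI k) : IncGraph where
  R := Quot (glueRelR L₁ L₂)
  B := Quot (glueRelB L₁ L₂)
  finR := Finite.of_surjective (Quot.mk (glueRelR L₁ L₂))
    (fun q => Quot.inductionOn q fun a => ⟨a, rfl⟩)
  finB := Finite.of_surjective (Quot.mk (glueRelB L₁ L₂))
    (fun q => Quot.inductionOn q fun a => ⟨a, rfl⟩)
  E := fun e v =>
    (∃ e₁ v₁, L₁.I.E e₁ v₁ ∧ e = Quot.mk (glueRelB L₁ L₂) (Sum.inl e₁) ∧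
      v = Quot.mk (glueRelR L₁ L₂) (Sum.inl v₁)) ∨
    (∃ e₂ v₂, L₂.I.E e₂ v₂ ∧ e = Quot.mk (glueRelB L₁ L₂) (Sum.inr e₂) ∧
      v = Quot.mk (glueRelR L₁ L₂) (Sum.inr v₂))
  covered := by
    intro v
    induction v using Quot.ind with
    | _ x =>
      cases x with
      | inl v₁ =>
        obtain ⟨e₁, he⟩ := L₁.I.covered v₁
        exact ⟨Quot.mk (glueRelB L₁ L₂) (Sum.inl e₁), Or.inl ⟨e₁, v₁, he, rfl, rfl⟩⟩
      | inr v₂ =>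
        obtain ⟨e₂, he⟩ := L₂.I.covered v₂
        exact ⟨Quot.mk (glueRelB L₁ L₂) (Sum.inr e₂), Or.inr ⟨e₂, v₂, he, rfl, rfl⟩⟩

/-- Glueing two `k`-labeled incidence graphs. -/
def glue (L₁ L₂ : KLI k) : KLI k where
  I := glueIG L₁ L₂
  r := fun i =>
    match L₁.r i with
    | some v => some (Quot.mk (glueRelR L₁ L₂) (Sum.inl v))
    | none => (L₂.r i).map fun v => Quot.mk (glueRelR L₁ L₂) (Sum.inr v)
  b := fun j =>
    match L₁.b j with
    | some e => some (Quot.mk (glueRelB L₁ L₂) (Sum.inl e))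
    | none => (L₂.b j).map fun e => Quot.mk (glueRelB L₁ L₂) (Sum.inr e)
  g := L₁.g.union L₂.g
  fin_r := by
    apply (L₁.fin_r.union L₂.fin_r).subset
    intro i hi
    simp only [Set.mem_setOf_eq] at hi
    cases h₁ : L₁.r i with
    | some v => exact Or.inl (by simp [h₁])
    | none =>
      right
      rw [h₁] at hi
      show (L₂.r i).isSome = true
      revert hi
      cases L₂.r i <;> intro h <;> first | rfl | cases h | exact Bool.noConfusion h

/-- The `k`-labeled incidence graph `L^f` defined by a guard function `f`. -/
def guardKLI (f : GuardF k) : KLI k where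
  I := { R := {i : ℕ // i ∈ f.dom}
         B := {j : Fin k // j ∈ f.img}
         E := fun j i => f.f i.1 = some j.1
         covered := by
           rintro ⟨i, hi⟩
           have hs : (f.f i).isSome := GuardF.mem_dom.mp hi
           have hj : (f.f i).get hs ∈ f.img :=
             GuardF.mem_img.mpr ⟨i, (Option.some_get hs).symm⟩
           exact ⟨⟨(f.f i).get hs, hj⟩, (Option.some_get hs).symm⟩ }
  r := fun i => if h : i ∈ f.dom then some ⟨i, h⟩ else none
  b := fun j => if h : j ∈ f.img then some ⟨j, h⟩ else none
  g := f
  fin_r := by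
    apply f.dom.finite_toSet.subset
    intro i hi
    simp only [Set.mem_setOf_eq] at hi
    by_cases h : i ∈ f.dom
    · simpa using h
    · simp [h] at hi

/-- Applying a transition `f` to `L`. -/
def applyTransition (L : KLI k) (f : GuardF k) : KLI k :=
  (guardKLI f).glue (L.removeB (L.g.img ∩ f.img ∩ L.domB))

end KLI

/-- The class `GLI^k` of guarded `k`-labeled incidence graphs. -/
inductive GLI (k : ℕ) : KLI k → Prop
  | base (L : KLI k) :
      (∀ v : L.I.R, ∃ i, L.r i = some v) →
      (∀ e : L.I.B, ∃ j, L.b j = some e) →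
      (∀ i, (L.r i).isSome ↔ (L.g.f i).isSome) →
      L.realGuards → GLI k L
  | removeR (L : KLI k) (X : Finset ℕ) :
      GLI k L → (∀ i ∈ X, (L.r i).isSome) → GLI k (L.removeR X)
  | removeB (L : KLI k) (X : Finset (Fin k)) :
      GLI k L → (∀ j ∈ X, (L.b j).isSome ∧ j ∉ L.g.img) → GLI k (L.removeB X)
  | trans (L : KLI k) (f : GuardF k) :
      GLI k L → L.g.IsTransition f → GLI k (L.applyTransition f)
  | glue (L L' : KLI k) :
      GLI k L → GLI k L' → GuardF.Compatible L.g L'.g → GLI k (L.glue L')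

/-- Two `k`-labeled incidence graphs are compatible. -/
def KCompatible {k : ℕ} (L L' : KLI k) : Prop :=
  (∀ i, (L.r i).isSome ↔ (L'.r i).isSome) ∧
  (∀ j, (L.b j).isSome ↔ (L'.b j).isSome) ∧ L.g.f = L'.g.f

/-- Homomorphisms between `k`-labeled incidence graphs: they respect the labels
and ignore the guard functions. -/
def KHom {k : ℕ} (L L' : KLI k) : Type :=
  {h : (L.I.R → L'.I.R) × (L.I.B → L'.I.B) //
    (∀ e v, L.I.E e v → L'.I.E (h.2 e) (h.1 v)) ∧
    (∀ i v, L.r i = some v → L'.r i = some (h.1 v)) ∧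
    (∀ j e, L.b j = some e → L'.b j = some (h.2 e))}

/-- The number of homomorphisms between `k`-labeled incidence graphs. -/
def khom {k : ℕ} (L L' : KLI k) : ℕ := Nat.card (KHom L L')

/-! ### Quantum incidence graphs -/

/-- A formal linear combination of `k`-labeled incidence graphs, given as a list
of coefficient/component pairs. -/
abbrev QIG (k : ℕ) := List (ℝ × KLI k)

/-- `Q` is a `k`-labeled quantum incidence graph: it is a nonempty formal linear
combination of pairwise compatible `k`-labeled incidence graphs. -/
def IsQuantum {k : ℕ} (Q : QIG k) : Prop :=
  Q ≠ [] ∧ ∀ p ∈ Q, ∀ q ∈ Q, KCompatible p.2 q.2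

/-- Homomorphism count from a quantum incidence graph. -/
def qhom {k : ℕ} (Q : QIG k) (L : KLI k) : ℝ :=
  (Q.map fun p => p.1 * (khom p.2 L : ℝ)).sum

/-- Glueing of quantum incidence graphs. -/
def qglue {k : ℕ} (Q Q' : QIG k) : QIG k :=
  Q.flatMap fun p => Q'.map fun q => (p.1 * q.1, p.2.glue q.2)

/-- Componentwise removal of red labels. -/
def qremoveR {k : ℕ} (Q : QIG k) (X : Finset ℕ) : QIG k :=
  Q.map fun p => (p.1, p.2.removeR X)

/-- Componentwise removal of blue labels. -/
def qremoveB {k : ℕ} (Q : QIG k) (X : Finset (Fin k)) : QIG k :=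
  Q.map fun p => (p.1, p.2.removeB X)

/-- Componentwise application of a transition. -/
def qapplyTransition {k : ℕ} (Q : QIG k) (f : GuardF k) : QIG k :=
  Q.map fun p => (p.1, p.2.applyTransition f)

/-- Guarded quantum incidence graphs: all components belong to `GLI^k`. -/
def IsQGLI {k : ℕ} (Q : QIG k) : Prop := IsQuantum Q ∧ ∀ p ∈ Q, GLI k p.2

end

noncomputable section



open SimpleGraph

/-! ### preliminaries -/

lemma ncard_label_le {k : ℕ} {X : Type} (F : Fin k → Option X) :
    Set.ncard {e : X | ∃ j, F j = some e} ≤ k := by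
  classical
  have h : ∀ e : {e : X | ∃ j, F j = some e}, ∃ j : Fin k, F j = some e.1 := fun e => e.2
  choose f hf using h
  have hinj : Function.Injective f := by
    intro a b hab
    have h1 := hf a
    rw [hab, hf b] at h1
    exact (Subtype.ext (Option.some_injective _ h1)).symm
  calc Set.ncard {e : X | ∃ j, F j = some e}
      = Nat.card {e : X | ∃ j, F j = some e} := (Nat.card_coe_set_eq _).symm
    _ ≤ Nat.card (Fin k) := Nat.card_le_card_of_injective f hinj
    _ = k := by simp

instance optionFinite {A : Type} [Finite A] : Finite (Option A) :=
  Finite.of_surjective (fun x : A ⊕ Unit => Sum.elim some (fun _ => none) x)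
    (by rintro (_ | a)
        · exact ⟨Sum.inr (), rfl⟩
        · exact ⟨Sum.inl a, rfl⟩)

def IndConn {V : Type} (G : SimpleGraph V) (S : Set V) : Prop :=
  S.Nonempty ∧ ∀ a ∈ S, ∀ b ∈ S, ∃ w : G.Walk a b, ∀ x ∈ w.support, x ∈ S

def toInduceWalk {V : Type} {G : SimpleGraph V} {S : Set V} :
    ∀ {a b : V} (w : G.Walk a b), (∀ x ∈ w.support, x ∈ S) → ∀ (ha : a ∈ S) (hb : b ∈ S),
      (G.induce S).Walk ⟨a, ha⟩ ⟨b, hb⟩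
  | _, _, .nil, _, _, _ => .nil
  | _, _, .cons (v := c) h p, hsup, _, hb =>
    SimpleGraph.Walk.cons (by exact h)
      (toInduceWalk p (fun x hx => hsup x (by simp [hx])) (hsup c (by simp)) hb)

lemma IndConn.induce_connected {V : Type} {G : SimpleGraph V} {S : Set V} (h : IndConn G S) :
    (G.induce S).Connected := by
  obtain ⟨⟨x, hx⟩, hwalk⟩ := h
  have hne : Nonempty ↥S := ⟨⟨x, hx⟩⟩
  refine SimpleGraph.Connected.mk ?_
  intro a b
  obtain ⟨w, hw⟩ := hwalk a.1 a.2 b.1 b.2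
  exact ⟨toInduceWalk w hw a.2 b.2⟩

lemma IndConn.map {V W : Type} {G : SimpleGraph V} {G' : SimpleGraph W} (f : G →g G')
    {S : Set V} (h : IndConn G S) : IndConn G' (f '' S) := by
  obtain ⟨⟨x, hx⟩, hwalk⟩ := h
  refine ⟨⟨f x, ⟨x, hx, rfl⟩⟩, ?_⟩
  rintro _ ⟨a, ha, rfl⟩ _ ⟨b, hb, rfl⟩
  obtain ⟨w, hw⟩ := hwalk a ha b hb
  refine ⟨w.map f, ?_⟩
  intro y hy
  rw [SimpleGraph.Walk.support_map, List.mem_map] at hy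
  obtain ⟨z, hz, rfl⟩ := hy
  exact ⟨z, hw z hz, rfl⟩

lemma indConn_of_hub {V : Type} {G : SimpleGraph V} {S : Set V} {h₀ : V} (hmem : h₀ ∈ S)
    (hw : ∀ a ∈ S, ∃ w : G.Walk a h₀, ∀ x ∈ w.support, x ∈ S) : IndConn G S := by
  refine ⟨⟨h₀, hmem⟩, fun a ha b hb => ?_⟩
  obtain ⟨w₁, hw₁⟩ := hw a ha
  obtain ⟨w₂, hw₂⟩ := hw b hb
  refine ⟨w₁.append w₂.reverse, fun x hx => ?_⟩
  rw [SimpleGraph.Walk.mem_support_append_iff] at hx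
  rcases hx with hx | hx
  · exact hw₁ x hx
  · rw [SimpleGraph.Walk.support_reverse, List.mem_reverse] at hx
    exact hw₂ x hx

lemma indConn_singleton {V : Type} (G : SimpleGraph V) (x : V) : IndConn G {x} :=
  ⟨⟨x, rfl⟩, by rintro a rfl b rfl; exact ⟨.nil, by simp⟩⟩

lemma indConn_subsingleton {V : Type} (G : SimpleGraph V) {S : Set V}
    (hne : S.Nonempty) (hss : S.Subsingleton) : IndConn G S := by
  obtain ⟨x, hx⟩ := hne
  have : S = {x} := hss.eq_singleton_of_mem hx
  rw [this]; exact indConn_singleton G x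
open SimpleGraph

section RTree

variable {V : Type}

def rtGraph (parent : V → V) : SimpleGraph V where
  Adj u v := u ≠ v ∧ (parent u = v ∨ parent v = u)
  symm := by
    constructor
    intro u v ⟨h1, h2⟩
    exact ⟨h1.symm, h2.symm⟩
  loopless := by constructor; intro v ⟨h1, _⟩; exact h1 rfl

def rtDepth (root : V) (parent : V → V) (v : V) : ℕ := sInf {n | parent^[n] v = root}

variable (root : V) (parent : V → V)

lemma rtDepth_spec (hwf : ∀ v, ∃ n, parent^[n] v = root) (v : V) :
    parent^[rtDepth root parent v] v = root :=
  Nat.sInf_mem (hwf v)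

lemma rtDepth_le {v : V} {n : ℕ} (h : parent^[n] v = root) : rtDepth root parent v ≤ n :=
  Nat.sInf_le h

lemma rtDepth_pos (hwf : ∀ v, ∃ n, parent^[n] v = root) {v : V} (h : v ≠ root) :
    0 < rtDepth root parent v := by
  rcases Nat.eq_zero_or_pos (rtDepth root parent v) with h0 | h0
  · exfalso
    have hs := rtDepth_spec root parent hwf v
    rw [h0] at hs
    exact h hs
  · exact h0

lemma rtDepth_parent_lt (hwf : ∀ v, ∃ n, parent^[n] v = root) {v : V} (h : v ≠ root) :
    rtDepth root parent (parent v) < rtDepth root parent v := by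
  have hpos := rtDepth_pos root parent hwf h
  have hspec := rtDepth_spec root parent hwf v
  have hiter : parent^[rtDepth root parent v - 1] (parent v) = root := by
    rw [← Function.iterate_succ_apply]
    rwa [Nat.succ_eq_add_one, Nat.sub_add_cancel hpos]
  exact lt_of_le_of_lt (rtDepth_le root parent hiter) (Nat.sub_lt hpos Nat.one_pos)

lemma rt_parent_ne (hwf : ∀ v, ∃ n, parent^[n] v = root) {v : V} (h : v ≠ root) :
    parent v ≠ v := by
  intro he
  obtain ⟨n, hn⟩ := hwf v
  have hfix : ∀ n, parent^[n] v = v := by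
    intro n
    induction n with
    | zero => rfl
    | succ m ih => rw [Function.iterate_succ_apply, he, ih]
  exact h ((hfix n) ▸ hn)

lemma rt_adj_cases (hroot : parent root = root) {u v : V} (h : (rtGraph parent).Adj u v) :
    (u ≠ root ∧ parent u = v) ∨ (v ≠ root ∧ parent v = u) := by
  obtain ⟨hne, hp⟩ := h
  rcases hp with hp | hp
  · left
    refine ⟨?_, hp⟩
    rintro rfl
    rw [hroot] at hp
    exact hne hp
  · right
    refine ⟨?_, hp⟩
    rintro rfl
    rw [hroot] at hp
    exact hne hp.symm

lemma rt_reach (hwf : ∀ v, ∃ n, parent^[n] v = root) (v : V) :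
    (rtGraph parent).Reachable v root := by
  obtain ⟨n, hn⟩ := hwf v
  induction n generalizing v with
  | zero => exact hn ▸ SimpleGraph.Reachable.refl _
  | succ m ih =>
    rcases eq_or_ne v root with rfl | hv
    · rfl
    · have hadj : (rtGraph parent).Adj v (parent v) :=
        ⟨fun he => (rt_parent_ne root parent hwf hv) he.symm, Or.inl rfl⟩
      exact (SimpleGraph.Adj.reachable hadj).trans
        (ih (parent v) (by rwa [← Function.iterate_succ_apply]))

lemma rt_connected [Nonempty V] (hwf : ∀ v, ∃ n, parent^[n] v = root) :
    (rtGraph parent).Connected := by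
  refine SimpleGraph.Connected.mk ?_
  intro a b
  exact (rt_reach root parent hwf a).trans (rt_reach root parent hwf b).symm

def rtBelow (parent : V → V) (a : V) (v : V) : Prop := ∃ n, parent^[n] v = a

lemma rt_acyclic (hroot : parent root = root) (hwf : ∀ v, ∃ n, parent^[n] v = root) :
    (rtGraph parent).IsAcyclic := by
  rw [isAcyclic_iff_forall_adj_isBridge]
  intro u' v' hadj'
  suffices key : ∀ a b : V, a ≠ root → parent a = b → a ≠ b →
      (rtGraph parent).IsBridge s(a, b) by
    rcases rt_adj_cases root parent hroot hadj' with ⟨h1, h2⟩ | ⟨h1, h2⟩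
    · exact key u' v' h1 h2 hadj'.ne
    · rw [Sym2.eq_swap]
      exact key v' u' h1 h2 hadj'.ne'
  intro a b ha hab hne
  rw [SimpleGraph.isBridge_iff]
  rintro ⟨w⟩
  have hPinv : ∀ x y : V, ((rtGraph parent) \ fromEdgeSet {s(a, b)}).Adj x y →
      (rtBelow parent a x ↔ rtBelow parent a y) := by
    have main : ∀ x y : V, x ≠ root → parent x = y → ¬(s(x, y) = s(a, b)) →
        (rtBelow parent a x ↔ rtBelow parent a y) := by
      intro x y hx hxy hnedge
      constructor
      · rintro ⟨n, hn⟩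
        cases n with
        | zero =>
          exfalso
          apply hnedge
          simp only [Function.iterate_zero, id] at hn
          subst hn
          have hyb : y = b := hxy.symm.trans hab
          rw [hyb]
        | succ m =>
          exact ⟨m, by rwa [Function.iterate_succ_apply, hxy] at hn⟩
      · rintro ⟨n, hn⟩
        exact ⟨n + 1, by rwa [Function.iterate_succ_apply, hxy]⟩
    intro x y hxy
    obtain ⟨hadj, hnedge⟩ := hxy
    simp only [fromEdgeSet_adj, Set.mem_singleton_iff, not_and] at hnedge
    have hnedge' : ¬(s(x, y) = s(a, b)) := fun h => (hnedge h) hadj.ne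
    rcases rt_adj_cases root parent hroot hadj with ⟨h1, h2⟩ | ⟨h1, h2⟩
    · exact main x y h1 h2 hnedge'
    · exact (main y x h1 h2 (by rwa [Sym2.eq_swap] at hnedge')).symm
  have hwalk : ∀ {x y : V}, ((rtGraph parent) \ fromEdgeSet {s(a, b)}).Walk x y →
      (rtBelow parent a x ↔ rtBelow parent a y) := by
    intro x y w'
    induction w' with
    | nil => rfl
    | cons h p ih => exact (hPinv _ _ h).trans ih
  have hPa : rtBelow parent a a := ⟨0, rfl⟩
  have hPb : ¬rtBelow parent a b := by
    rintro ⟨m, hm⟩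
    cases m with
    | zero =>
      simp only [Function.iterate_zero, id] at hm
      exact hne hm.symm
    | succ m =>
      have hchain : ∀ i ≤ m + 1, parent^[i] b ≠ root := by
        intro i hi hroot_i
        have hfull : parent^[m + 1] b = root := by
          have h2 : parent^[(m + 1) - i] (parent^[i] b) = root := by
            rw [hroot_i]
            generalize ((m + 1) - i) = n
            induction n with
            | zero => rfl
            | succ n2 ih => rw [Function.iterate_succ_apply, hroot, ih]
          rwa [← Function.iterate_add_apply, Nat.sub_add_cancel hi] at h2
        rw [hm] at hfull
        exact ha hfull
      have hdec : ∀ i ≤ m + 1,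
          rtDepth root parent (parent^[i] b) + i ≤ rtDepth root parent b := by
        intro i hi
        induction i with
        | zero => simp
        | succ n ih =>
          have hn : parent^[n] b ≠ root := hchain n (le_of_lt (Nat.lt_of_succ_le hi))
          have hlt := rtDepth_parent_lt root parent hwf hn
          rw [← Function.iterate_succ_apply' parent n b] at hlt
          have ih' := ih (le_of_lt (Nat.lt_of_succ_le hi))
          simp only [Nat.succ_eq_add_one] at hlt ih' ⊢
          omega
      have h1 := hdec (m + 1) le_rfl
      rw [hm] at h1
      have h2 : rtDepth root parent b < rtDepth root parent a := by
        have hlt := rtDepth_parent_lt root parent hwf ha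
        rwa [hab] at hlt
      omega
  exact hPb ((hwalk w).mp hPa)

lemma rt_isTree [Nonempty V] (hroot : parent root = root)
    (hwf : ∀ v, ∃ n, parent^[n] v = root) : (rtGraph parent).IsTree :=
  ⟨rt_connected root parent hwf, rt_acyclic root parent hroot hwf⟩

end RTree
/-! ### Good decompositions -/

def bagOf {I : IncGraph} {T : Type} (Cover : T → Set I.B) (t : T) : Set I.R :=
  ⋃ e ∈ Cover t, I.nbhd e

structure GoodDec (k : ℕ) (I : IncGraph) (r : ℕ → Option I.R) (b : Fin k → Option I.B) where
  T : Type
  [finT : Finite T]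
  root : T
  parent : T → T
  parent_root : parent root = root
  wf : ∀ t, ∃ n, parent^[n] t = root
  Cover : T → Set I.B
  complete : ∀ e : I.B, ∃ t, e ∈ Cover t
  connB : ∀ e : I.B, IndConn (rtGraph parent) {t | e ∈ Cover t}
  connR : ∀ v : I.R, IndConn (rtGraph parent) {t | v ∈ bagOf Cover t}
  width : ∀ t, (Cover t).ncard ≤ k
  cover_root : ∀ j e, b j = some e → e ∈ Cover root
  bag_root : ∀ i v, r i = some v → v ∈ bagOf Cover root

attribute [instance] GoodDec.finT

def GoodDec.toEHD {k : ℕ} {I : IncGraph} {r : ℕ → Option I.R} {b : Fin k → Option I.B}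
    (G : GoodDec k I r b) : EHD I where
  T := G.T
  tr := rtGraph G.parent
  isTree := by
    have : Nonempty G.T := ⟨G.root⟩
    exact rt_isTree G.root G.parent G.parent_root G.wf
  Bag := bagOf G.Cover
  Cover := G.Cover
  complete := by
    intro e
    obtain ⟨t, ht⟩ := G.complete e
    exact ⟨t, Set.subset_biUnion_of_mem ht, ht⟩
  connR := fun v => (G.connR v).induce_connected
  covering := fun t => subset_rfl
  precise := fun t => rfl
  connB := fun e => (G.connB e).induce_connected

theorem GoodDec.mem_IEHW {k : ℕ} {I : IncGraph} {r : ℕ → Option I.R} {b : Fin k → Option I.B}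
    (G : GoodDec k I r b) : I ∈ IEHW k :=
  ⟨G.toEHD, G.width⟩

def GoodDec.mono {k : ℕ} {I : IncGraph} {r r' : ℕ → Option I.R} {b b' : Fin k → Option I.B}
    (G : GoodDec k I r b) (hr : ∀ i v, r' i = some v → r i = some v)
    (hb : ∀ j e, b' j = some e → b j = some e) : GoodDec k I r' b' where
  T := G.T
  root := G.root
  parent := G.parent
  parent_root := G.parent_root
  wf := G.wf
  Cover := G.Cover
  complete := G.complete
  connB := G.connB
  connR := G.connR
  width := G.width
  cover_root := fun j e he => G.cover_root j e (hb j e he)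
  bag_root := fun i v hv => G.bag_root i v (hr i v hv)

def goodDec_of_fullyLabeled {k : ℕ} (I : IncGraph) (r : ℕ → Option I.R)
    (b : Fin k → Option I.B) (hB : ∀ e, ∃ j, b j = some e) : GoodDec k I r b where
  T := PUnit
  root := PUnit.unit
  parent := id
  parent_root := rfl
  wf := fun t => ⟨0, Subsingleton.elim _ _⟩
  Cover := fun _ => {e | ∃ j, b j = some e}
  complete := fun e => ⟨PUnit.unit, hB e⟩
  connB := fun e => indConn_subsingleton _ ⟨PUnit.unit, hB e⟩
    (fun a _ c _ => Subsingleton.elim a c)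
  connR := by
    intro v
    obtain ⟨e, he⟩ := I.covered v
    refine indConn_subsingleton _ ⟨PUnit.unit, ?_⟩ (fun a _ c _ => Subsingleton.elim a c)
    exact Set.mem_biUnion (hB e) he
  width := fun _ => ncard_label_le b
  cover_root := fun j e he => ⟨j, he⟩
  bag_root := by
    intro i v hv
    obtain ⟨e, he⟩ := I.covered v
    exact Set.mem_biUnion (hB e) he
/-! ### Generic lemmas about the glueing quotients -/

section EqvAux

variable {K A B : Type}

def pairRel (F₁ : K → Option A) (F₂ : K → Option B) : (A ⊕ B) → (A ⊕ B) → Prop :=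
  fun x y => ∃ i a b, F₁ i = some a ∧ F₂ i = some b ∧ x = Sum.inl a ∧ y = Sum.inr b

lemma pairRel_eqvGen_inl {F₁ : K → Option A} {F₂ : K → Option B} {a : A}
    (h : ∀ i, F₁ i ≠ some a) {x y : A ⊕ B}
    (hgen : Relation.EqvGen (pairRel F₁ F₂) x y) : x = Sum.inl a ↔ y = Sum.inl a := by
  induction hgen with
  | rel x y hr =>
    obtain ⟨i, a', b', h1, h2, rfl, rfl⟩ := hr
    constructor
    · rintro heq
      rw [Sum.inl.injEq] at heq
      exact absurd (heq ▸ h1) (h i)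
    · rintro heq
      exact absurd heq (by simp)
  | refl => exact Iff.rfl
  | symm _ _ _ ih => exact ih.symm
  | trans _ _ _ _ _ ih1 ih2 => exact ih1.trans ih2

lemma pairRel_eqvGen_inr {F₁ : K → Option A} {F₂ : K → Option B} {b : B}
    (h : ∀ i, F₂ i ≠ some b) {x y : A ⊕ B}
    (hgen : Relation.EqvGen (pairRel F₁ F₂) x y) : x = Sum.inr b ↔ y = Sum.inr b := by
  induction hgen with
  | rel x y hr =>
    obtain ⟨i, a', b', h1, h2, rfl, rfl⟩ := hr
    constructor
    · rintro heq
      exact absurd heq (by simp)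
    · rintro heq
      rw [Sum.inr.injEq] at heq
      exact absurd (heq ▸ h2) (h i)
  | refl => exact Iff.rfl
  | symm _ _ _ ih => exact ih.symm
  | trans _ _ _ _ _ ih1 ih2 => exact ih1.trans ih2

lemma pairRel_inl_eq {F₁ : K → Option A} {F₂ : K → Option B} {a : A}
    (h : ∀ i, F₁ i ≠ some a) {x : A ⊕ B}
    (heq : Quot.mk (pairRel F₁ F₂) x = Quot.mk (pairRel F₁ F₂) (Sum.inl a)) :
    x = Sum.inl a :=
  (pairRel_eqvGen_inl h (Quot.eqvGen_exact heq)).mpr rfl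

lemma pairRel_inr_eq {F₁ : K → Option A} {F₂ : K → Option B} {b : B}
    (h : ∀ i, F₂ i ≠ some b) {x : A ⊕ B}
    (heq : Quot.mk (pairRel F₁ F₂) x = Quot.mk (pairRel F₁ F₂) (Sum.inr b)) :
    x = Sum.inr b :=
  (pairRel_eqvGen_inr h (Quot.eqvGen_exact heq)).mpr rfl

end EqvAux

namespace KLI

variable {k : ℕ} (L₁ L₂ : KLI k)

/-- The class of a left blue node. -/
def βl (e₁ : L₁.I.B) : (L₁.glue L₂).I.B := Quot.mk (glueRelB L₁ L₂) (Sum.inl e₁)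
def βr (e₂ : L₂.I.B) : (L₁.glue L₂).I.B := Quot.mk (glueRelB L₁ L₂) (Sum.inr e₂)
def ρl (v₁ : L₁.I.R) : (L₁.glue L₂).I.R := Quot.mk (glueRelR L₁ L₂) (Sum.inl v₁)
def ρr (v₂ : L₂.I.R) : (L₁.glue L₂).I.R := Quot.mk (glueRelR L₁ L₂) (Sum.inr v₂)

lemma glueRelB_eq : glueRelB L₁ L₂ = pairRel L₁.b L₂.b := rfl
lemma glueRelR_eq : glueRelR L₁ L₂ = pairRel L₁.r L₂.r := rfl

variable {L₁ L₂}

lemma βl_eq_βr {j : Fin k} {e₁ e₂} (h₁ : L₁.b j = some e₁) (h₂ : L₂.b j = some e₂) :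
    βl L₁ L₂ e₁ = βr L₁ L₂ e₂ :=
  Quot.sound ⟨j, e₁, e₂, h₁, h₂, rfl, rfl⟩

lemma ρl_eq_ρr {i : ℕ} {v₁ v₂} (h₁ : L₁.r i = some v₁) (h₂ : L₂.r i = some v₂) :
    ρl L₁ L₂ v₁ = ρr L₁ L₂ v₂ :=
  Quot.sound ⟨i, v₁, v₂, h₁, h₂, rfl, rfl⟩

lemma glue_b_inl {j : Fin k} {e₁} (h : L₁.b j = some e₁) :
    (L₁.glue L₂).b j = some (βl L₁ L₂ e₁) := by
  show (match L₁.b j with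
    | some e => some (Quot.mk (glueRelB L₁ L₂) (Sum.inl e))
    | none => (L₂.b j).map fun e => Quot.mk (glueRelB L₁ L₂) (Sum.inr e)) = _
  rw [h]
  rfl

lemma glue_b_inr {j : Fin k} {e₂} (h : L₂.b j = some e₂) :
    (L₁.glue L₂).b j = some (βr L₁ L₂ e₂) := by
  show (match L₁.b j with
    | some e => some (Quot.mk (glueRelB L₁ L₂) (Sum.inl e))
    | none => (L₂.b j).map fun e => Quot.mk (glueRelB L₁ L₂) (Sum.inr e)) = _
  cases h₁ : L₁.b j with
  | none => rw [h]; rfl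
  | some e₁ => simp only [Option.some.injEq]; exact congrArg some (βl_eq_βr h₁ h)

lemma glue_b_cases {j : Fin k} {C} (h : (L₁.glue L₂).b j = some C) :
    (∃ e₁, L₁.b j = some e₁ ∧ C = βl L₁ L₂ e₁) ∨
      (∃ e₂, L₂.b j = some e₂ ∧ C = βr L₁ L₂ e₂) := by
  have h' : (match L₁.b j with
    | some e => some (Quot.mk (glueRelB L₁ L₂) (Sum.inl e))
    | none => (L₂.b j).map fun e => Quot.mk (glueRelB L₁ L₂) (Sum.inr e)) = some C := h
  cases h₁ : L₁.b j with
  | some e₁ =>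
    rw [h₁] at h'
    exact Or.inl ⟨e₁, rfl, (Option.some_injective _ h').symm⟩
  | none =>
    rw [h₁] at h'
    replace h' := Option.map_eq_some_iff.mp (show Option.map (fun e => Quot.mk (glueRelB L₁ L₂) (Sum.inr e)) (L₂.b j) = some C from h')
    obtain ⟨e₂, he₂, heq⟩ := h'
    exact Or.inr ⟨e₂, he₂, heq.symm⟩

lemma glue_r_inl {i : ℕ} {v₁} (h : L₁.r i = some v₁) :
    (L₁.glue L₂).r i = some (ρl L₁ L₂ v₁) := by
  show (match L₁.r i with
    | some v => some (Quot.mk (glueRelR L₁ L₂) (Sum.inl v))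
    | none => (L₂.r i).map fun v => Quot.mk (glueRelR L₁ L₂) (Sum.inr v)) = _
  rw [h]
  rfl

lemma glue_r_inr {i : ℕ} {v₂} (h : L₂.r i = some v₂) :
    (L₁.glue L₂).r i = some (ρr L₁ L₂ v₂) := by
  show (match L₁.r i with
    | some v => some (Quot.mk (glueRelR L₁ L₂) (Sum.inl v))
    | none => (L₂.r i).map fun v => Quot.mk (glueRelR L₁ L₂) (Sum.inr v)) = _
  cases h₁ : L₁.r i with
  | none => rw [h]; rfl
  | some v₁ => simp only [Option.some.injEq]; exact congrArg some (ρl_eq_ρr h₁ h)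

lemma glue_r_cases {i : ℕ} {w} (h : (L₁.glue L₂).r i = some w) :
    (∃ v₁, L₁.r i = some v₁ ∧ w = ρl L₁ L₂ v₁) ∨
      (L₁.r i = none ∧ ∃ v₂, L₂.r i = some v₂ ∧ w = ρr L₁ L₂ v₂) := by
  have h' : (match L₁.r i with
    | some v => some (Quot.mk (glueRelR L₁ L₂) (Sum.inl v))
    | none => (L₂.r i).map fun v => Quot.mk (glueRelR L₁ L₂) (Sum.inr v)) = some w := h
  cases h₁ : L₁.r i with
  | some v₁ =>
    rw [h₁] at h'
    exact Or.inl ⟨v₁, rfl, (Option.some_injective _ h').symm⟩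
  | none =>
    rw [h₁] at h'
    replace h' := Option.map_eq_some_iff.mp (show Option.map (fun v => Quot.mk (glueRelR L₁ L₂) (Sum.inr v)) (L₂.r i) = some w from h')
    obtain ⟨v₂, hv₂, heq⟩ := h'
    exact Or.inr ⟨rfl, v₂, hv₂, heq.symm⟩

lemma glue_E_inl {e₁ v₁} (h : L₁.I.E e₁ v₁) :
    (L₁.glue L₂).I.E (βl L₁ L₂ e₁) (ρl L₁ L₂ v₁) :=
  Or.inl ⟨e₁, v₁, h, rfl, rfl⟩

lemma glue_E_inr {e₂ v₂} (h : L₂.I.E e₂ v₂) :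
    (L₁.glue L₂).I.E (βr L₁ L₂ e₂) (ρr L₁ L₂ v₂) :=
  Or.inr ⟨e₂, v₂, h, rfl, rfl⟩

lemma glue_E_cases {C w} (h : (L₁.glue L₂).I.E C w) :
    (∃ e₁ v₁, L₁.I.E e₁ v₁ ∧ C = βl L₁ L₂ e₁ ∧ w = ρl L₁ L₂ v₁) ∨
      (∃ e₂ v₂, L₂.I.E e₂ v₂ ∧ C = βr L₁ L₂ e₂ ∧ w = ρr L₁ L₂ v₂) := h

/-- An unlabeled left blue node forms a singleton class. -/
lemma βl_singleton {e₁} (h : ∀ j, L₁.b j ≠ some e₁) {x}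
    (heq : Quot.mk (glueRelB L₁ L₂) x = βl L₁ L₂ e₁) : x = Sum.inl e₁ :=
  pairRel_inl_eq h heq

lemma βr_singleton {e₂} (h : ∀ j, L₂.b j ≠ some e₂) {x}
    (heq : Quot.mk (glueRelB L₁ L₂) x = βr L₁ L₂ e₂) : x = Sum.inr e₂ :=
  pairRel_inr_eq h heq

lemma ρl_singleton {v₁} (h : ∀ i, L₁.r i ≠ some v₁) {x}
    (heq : Quot.mk (glueRelR L₁ L₂) x = ρl L₁ L₂ v₁) : x = Sum.inl v₁ :=
  pairRel_inl_eq h heq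

lemma ρr_singleton {v₂} (h : ∀ i, L₂.r i ≠ some v₂) {x}
    (heq : Quot.mk (glueRelR L₁ L₂) x = ρr L₁ L₂ v₂) : x = Sum.inr v₂ :=
  pairRel_inr_eq h heq

end KLI

/-! ### glueing rooted trees -/

section SumTree

variable {T₁ T₂ : Type} (r₁ : T₁) (p₁ : T₁ → T₁) (r₂ : T₂) (p₂ : T₂ → T₂)

open Classical in
def sumParent : Option (T₁ ⊕ T₂) → Option (T₁ ⊕ T₂) := fun t =>
  match t with
  | none => none
  | some (Sum.inl t) => if t = r₁ then none else some (Sum.inl (p₁ t))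
  | some (Sum.inr t) => if t = r₂ then none else some (Sum.inr (p₂ t))

lemma sumParent_none : sumParent r₁ p₁ r₂ p₂ none = none := rfl

lemma sumParent_root₁ : sumParent r₁ p₁ r₂ p₂ (some (Sum.inl r₁)) = none := by
  simp [sumParent]

lemma sumParent_root₂ : sumParent r₁ p₁ r₂ p₂ (some (Sum.inr r₂)) = none := by
  simp [sumParent]

lemma sumParent_inl {t : T₁} (h : t ≠ r₁) :
    sumParent r₁ p₁ r₂ p₂ (some (Sum.inl t)) = some (Sum.inl (p₁ t)) := by
  simp [sumParent, h]

lemma sumParent_inr {t : T₂} (h : t ≠ r₂) :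
    sumParent r₁ p₁ r₂ p₂ (some (Sum.inr t)) = some (Sum.inr (p₂ t)) := by
  simp [sumParent, h]

lemma sumParent_wf_aux₁ : ∀ (n : ℕ) (t : T₁), p₁^[n] t = r₁ →
    (sumParent r₁ p₁ r₂ p₂)^[n + 1] (some (Sum.inl t)) = none := by
  intro n
  induction n with
  | zero =>
    intro t ht
    simp only [Function.iterate_zero, id] at ht
    rw [ht]
    exact sumParent_root₁ r₁ p₁ r₂ p₂
  | succ m ih =>
    intro t ht
    by_cases hroot : t = r₁
    · subst hroot
      rw [Function.iterate_succ_apply, sumParent_root₁]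
      exact Function.iterate_fixed rfl (m + 1)
    · rw [Function.iterate_succ_apply, sumParent_inl r₁ p₁ r₂ p₂ hroot]
      exact ih (p₁ t) (by rwa [← Function.iterate_succ_apply])

lemma sumParent_wf_aux₂ : ∀ (n : ℕ) (t : T₂), p₂^[n] t = r₂ →
    (sumParent r₁ p₁ r₂ p₂)^[n + 1] (some (Sum.inr t)) = none := by
  intro n
  induction n with
  | zero =>
    intro t ht
    simp only [Function.iterate_zero, id] at ht
    rw [ht]
    exact sumParent_root₂ r₁ p₁ r₂ p₂
  | succ m ih =>
    intro t ht
    by_cases hroot : t = r₂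
    · subst hroot
      rw [Function.iterate_succ_apply, sumParent_root₂]
      exact Function.iterate_fixed rfl (m + 1)
    · rw [Function.iterate_succ_apply, sumParent_inr r₁ p₁ r₂ p₂ hroot]
      exact ih (p₂ t) (by rwa [← Function.iterate_succ_apply])

lemma sumParent_wf (hw₁ : ∀ t, ∃ n, p₁^[n] t = r₁) (hw₂ : ∀ t, ∃ n, p₂^[n] t = r₂) :
    ∀ t, ∃ n, (sumParent r₁ p₁ r₂ p₂)^[n] t = none := by
  rintro (_ | (t | t))
  · exact ⟨0, rfl⟩
  · obtain ⟨n, hn⟩ := hw₁ t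
    exact ⟨n + 1, sumParent_wf_aux₁ r₁ p₁ r₂ p₂ n t hn⟩
  · obtain ⟨n, hn⟩ := hw₂ t
    exact ⟨n + 1, sumParent_wf_aux₂ r₁ p₁ r₂ p₂ n t hn⟩

def sumHom₁ (h₁ : p₁ r₁ = r₁) :
    rtGraph p₁ →g rtGraph (sumParent r₁ p₁ r₂ p₂) where
  toFun := fun t => some (Sum.inl t)
  map_rel' := by
    rintro u v ⟨hne, hp | hp⟩
    · refine ⟨by simpa using hne, Or.inl ?_⟩
      have hu : u ≠ r₁ := by rintro rfl; rw [h₁] at hp; exact hne hp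
      rw [sumParent_inl r₁ p₁ r₂ p₂ hu, hp]
    · refine ⟨by simpa using hne, Or.inr ?_⟩
      have hv : v ≠ r₁ := by rintro rfl; rw [h₁] at hp; exact hne hp.symm
      rw [sumParent_inl r₁ p₁ r₂ p₂ hv, hp]

def sumHom₂ (h₂ : p₂ r₂ = r₂) :
    rtGraph p₂ →g rtGraph (sumParent r₁ p₁ r₂ p₂) where
  toFun := fun t => some (Sum.inr t)
  map_rel' := by
    rintro u v ⟨hne, hp | hp⟩
    · refine ⟨by simpa using hne, Or.inl ?_⟩
      have hu : u ≠ r₂ := by rintro rfl; rw [h₂] at hp; exact hne hp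
      rw [sumParent_inr r₁ p₁ r₂ p₂ hu, hp]
    · refine ⟨by simpa using hne, Or.inr ?_⟩
      have hv : v ≠ r₂ := by rintro rfl; rw [h₂] at hp; exact hne hp.symm
      rw [sumParent_inr r₁ p₁ r₂ p₂ hv, hp]

lemma sumAdj_root₁ : (rtGraph (sumParent r₁ p₁ r₂ p₂)).Adj (some (Sum.inl r₁)) none :=
  ⟨by simp, Or.inl (sumParent_root₁ r₁ p₁ r₂ p₂)⟩

lemma sumAdj_root₂ : (rtGraph (sumParent r₁ p₁ r₂ p₂)).Adj (some (Sum.inr r₂)) none :=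
  ⟨by simp, Or.inl (sumParent_root₂ r₁ p₁ r₂ p₂)⟩

lemma hubWalk₁ (h₁ : p₁ r₁ = r₁) {P : Set T₁} {S : Set (Option (T₁ ⊕ T₂))}
    (hconn : IndConn (rtGraph p₁) P) {t : T₁} (ht : t ∈ P) (hroot : r₁ ∈ P)
    (him : ∀ s ∈ P, some (Sum.inl s) ∈ S) (hnone : none ∈ S) :
    ∃ w : (rtGraph (sumParent r₁ p₁ r₂ p₂)).Walk (some (Sum.inl t)) none,
      ∀ x ∈ w.support, x ∈ S := by
  obtain ⟨w₁, hw₁⟩ := hconn.2 t ht r₁ hroot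
  refine ⟨(w₁.map (sumHom₁ r₁ p₁ r₂ p₂ h₁)).append
    (SimpleGraph.Walk.cons (sumAdj_root₁ r₁ p₁ r₂ p₂) SimpleGraph.Walk.nil), ?_⟩
  intro x hx
  replace hx := (SimpleGraph.Walk.mem_support_append_iff _ _).mp hx
  rcases hx with hx | hx
  · replace hx := List.mem_map.mp (show x ∈ w₁.support.map (sumHom₁ r₁ p₁ r₂ p₂ h₁) by
      rw [← SimpleGraph.Walk.support_map]; exact hx)
    obtain ⟨z, hz, rfl⟩ := hx
    exact him z (hw₁ z hz)
  · change x ∈ [some (Sum.inl r₁), none] at hx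
    simp only [SimpleGraph.Walk.support_cons, SimpleGraph.Walk.support_nil, List.mem_cons,
      List.mem_singleton, List.not_mem_nil, or_false] at hx
    rcases hx with rfl | rfl
    · exact him r₁ hroot
    · exact hnone

lemma hubWalk₂ (h₂ : p₂ r₂ = r₂) {P : Set T₂} {S : Set (Option (T₁ ⊕ T₂))}
    (hconn : IndConn (rtGraph p₂) P) {t : T₂} (ht : t ∈ P) (hroot : r₂ ∈ P)
    (him : ∀ s ∈ P, some (Sum.inr s) ∈ S) (hnone : none ∈ S) :
    ∃ w : (rtGraph (sumParent r₁ p₁ r₂ p₂)).Walk (some (Sum.inr t)) none,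
      ∀ x ∈ w.support, x ∈ S := by
  obtain ⟨w₂, hw₂⟩ := hconn.2 t ht r₂ hroot
  refine ⟨(w₂.map (sumHom₂ r₁ p₁ r₂ p₂ h₂)).append
    (SimpleGraph.Walk.cons (sumAdj_root₂ r₁ p₁ r₂ p₂) SimpleGraph.Walk.nil), ?_⟩
  intro x hx
  replace hx := (SimpleGraph.Walk.mem_support_append_iff _ _).mp hx
  rcases hx with hx | hx
  · replace hx := List.mem_map.mp (show x ∈ w₂.support.map (sumHom₂ r₁ p₁ r₂ p₂ h₂) by
      rw [← SimpleGraph.Walk.support_map]; exact hx)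
    obtain ⟨z, hz, rfl⟩ := hx
    exact him z (hw₂ z hz)
  · change x ∈ [some (Sum.inr r₂), none] at hx
    simp only [SimpleGraph.Walk.support_cons, SimpleGraph.Walk.support_nil, List.mem_cons,
      List.mem_singleton, List.not_mem_nil, or_false] at hx
    rcases hx with rfl | rfl
    · exact him r₂ hroot
    · exact hnone

end SumTree
/-! ### glueing good decompositions -/

lemma mem_bagOf {I : IncGraph} {T : Type} {Cover : T → Set I.B} {t : T} {w : I.R} :
    w ∈ bagOf Cover t ↔ ∃ e ∈ Cover t, I.E e w := by
  simp [bagOf, IncGraph.nbhd]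

lemma βl_glue_labeled {k : ℕ} {L₁ L₂ : KLI k} {e₁ : L₁.I.B}
    (h : ∃ j, (L₁.glue L₂).b j = some (KLI.βl L₁ L₂ e₁)) : ∃ j, L₁.b j = some e₁ := by
  by_contra hun
  push_neg at hun
  obtain ⟨j, hj⟩ := h
  rcases KLI.glue_b_cases hj with ⟨e₁', hj', heq⟩ | ⟨e₂', hj', heq⟩
  · have h2 := KLI.βl_singleton hun heq.symm
    rw [Sum.inl.injEq] at h2
    exact hun j (h2 ▸ hj')
  · have h2 := KLI.βl_singleton hun heq.symm
    simp at h2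

lemma βr_glue_labeled {k : ℕ} {L₁ L₂ : KLI k} {e₂ : L₂.I.B}
    (h : ∃ j, (L₁.glue L₂).b j = some (KLI.βr L₁ L₂ e₂)) : ∃ j, L₂.b j = some e₂ := by
  by_contra hun
  push_neg at hun
  obtain ⟨j, hj⟩ := h
  rcases KLI.glue_b_cases hj with ⟨e₁', hj', heq⟩ | ⟨e₂', hj', heq⟩
  · have h2 := KLI.βr_singleton hun heq.symm
    simp at h2
  · have h2 := KLI.βr_singleton hun heq.symm
    rw [Sum.inr.injEq] at h2
    exact hun j (h2 ▸ hj')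

def glueCover {k : ℕ} (L₁ L₂ : KLI k) (G₁ : GoodDec k L₁.I L₁.r L₁.b)
    (G₂ : GoodDec k L₂.I L₂.r L₂.b) : Option (G₁.T ⊕ G₂.T) → Set (L₁.glue L₂).I.B := fun t =>
  match t with
  | none => {C | ∃ j, (L₁.glue L₂).b j = some C}
  | some (Sum.inl t) => (fun e₁ => KLI.βl L₁ L₂ e₁) '' G₁.Cover t
  | some (Sum.inr t) => (fun e₂ => KLI.βr L₁ L₂ e₂) '' G₂.Cover t

section GlueGood

variable {k : ℕ} {L₁ L₂ : KLI k} {G₁ : GoodDec k L₁.I L₁.r L₁.b}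
  {G₂ : GoodDec k L₂.I L₂.r L₂.b}

lemma mem_glueCover_inl {t : G₁.T} {C} :
    C ∈ glueCover L₁ L₂ G₁ G₂ (some (Sum.inl t)) ↔ ∃ e₁ ∈ G₁.Cover t, KLI.βl L₁ L₂ e₁ = C :=
  Set.mem_image _ _ _

lemma mem_glueCover_inr {t : G₂.T} {C} :
    C ∈ glueCover L₁ L₂ G₁ G₂ (some (Sum.inr t)) ↔ ∃ e₂ ∈ G₂.Cover t, KLI.βr L₁ L₂ e₂ = C :=
  Set.mem_image _ _ _

lemma mem_glueBag_inl {t : G₁.T} {w} :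
    w ∈ bagOf (glueCover L₁ L₂ G₁ G₂) (some (Sum.inl t)) ↔
      ∃ e₁ ∈ G₁.Cover t, (L₁.glue L₂).I.E (KLI.βl L₁ L₂ e₁) w := by
  rw [mem_bagOf]
  constructor
  · rintro ⟨C, hC, hE⟩
    obtain ⟨e₁, ht, rfl⟩ := mem_glueCover_inl.mp hC
    exact ⟨e₁, ht, hE⟩
  · rintro ⟨e₁, ht, hE⟩
    exact ⟨KLI.βl L₁ L₂ e₁, mem_glueCover_inl.mpr ⟨e₁, ht, rfl⟩, hE⟩

lemma mem_glueBag_inr {t : G₂.T} {w} :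
    w ∈ bagOf (glueCover L₁ L₂ G₁ G₂) (some (Sum.inr t)) ↔
      ∃ e₂ ∈ G₂.Cover t, (L₁.glue L₂).I.E (KLI.βr L₁ L₂ e₂) w := by
  rw [mem_bagOf]
  constructor
  · rintro ⟨C, hC, hE⟩
    obtain ⟨e₂, ht, rfl⟩ := mem_glueCover_inr.mp hC
    exact ⟨e₂, ht, hE⟩
  · rintro ⟨e₂, ht, hE⟩
    exact ⟨KLI.βr L₁ L₂ e₂, mem_glueCover_inr.mpr ⟨e₂, ht, rfl⟩, hE⟩

lemma mem_glueBag_none {w} :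
    w ∈ bagOf (glueCover L₁ L₂ G₁ G₂) none ↔
      ∃ C, (∃ j, (L₁.glue L₂).b j = some C) ∧ (L₁.glue L₂).I.E C w := by
  rw [mem_bagOf]
  exact Iff.rfl

end GlueGood

theorem glueGood {k : ℕ} (L₁ L₂ : KLI k)
    (G₁ : GoodDec k L₁.I L₁.r L₁.b) (G₂ : GoodDec k L₂.I L₂.r L₂.b)
    (h₁ : ∀ i v, L₁.r i = some v → ∃ e, (∃ j, L₁.b j = some e) ∧ L₁.I.E e v)
    (h₂ : ∀ i v, L₂.r i = some v →
      (L₁.r i).isSome ∨ ∃ e, (∃ j, L₂.b j = some e) ∧ L₂.I.E e v) :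
    Nonempty (GoodDec k (L₁.glue L₂).I (L₁.glue L₂).r (L₁.glue L₂).b) := by
  classical
  haveI hfin1 : Finite G₁.T := G₁.finT
  haveI hfin2 : Finite G₂.T := G₂.finT
  refine ⟨{
    T := Option (G₁.T ⊕ G₂.T)
    root := none
    parent := sumParent G₁.root G₁.parent G₂.root G₂.parent
    parent_root := rfl
    wf := sumParent_wf G₁.root G₁.parent G₂.root G₂.parent G₁.wf G₂.wf
    Cover := glueCover L₁ L₂ G₁ G₂
    complete := ?_
    connB := ?_
    connR := ?_
    width := ?_
    cover_root := ?_
    bag_root := ?_ }⟩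
  · -- complete
    intro C
    obtain ⟨x, hx⟩ := Quot.exists_rep C
    rcases x with e₁ | e₂
    · obtain ⟨t, ht⟩ := G₁.complete e₁
      exact ⟨some (Sum.inl t), (mem_glueCover_inl (G₁ := G₁) (G₂ := G₂)).mpr ⟨e₁, ht, hx⟩⟩
    · obtain ⟨t, ht⟩ := G₂.complete e₂
      exact ⟨some (Sum.inr t), (mem_glueCover_inr (G₁ := G₁) (G₂ := G₂)).mpr ⟨e₂, ht, hx⟩⟩
  · -- connB
    intro C
    by_cases hlab : ∃ j, (L₁.glue L₂).b j = some C
    · refine indConn_of_hub (h₀ := (none : Option (G₁.T ⊕ G₂.T))) hlab ?_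
      rintro (_ | (t | t)) ha
      · exact ⟨SimpleGraph.Walk.nil, by
          intro x hx
          simp only [SimpleGraph.Walk.support_nil, List.mem_singleton] at hx
          subst hx; exact hlab⟩
      · obtain ⟨e₁, ht, heq⟩ := (mem_glueCover_inl (G₁ := G₁) (G₂ := G₂)).mp ha
        obtain ⟨j, hj⟩ := βl_glue_labeled (heq ▸ hlab)
        refine hubWalk₁ _ _ _ _ G₁.parent_root (G₁.connB e₁) ht (G₁.cover_root j e₁ hj)
          ?_ hlab
        intro s hs
        show C ∈ glueCover L₁ L₂ G₁ G₂ (some (Sum.inl s))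
        exact (mem_glueCover_inl (G₁ := G₁) (G₂ := G₂)).mpr ⟨e₁, hs, heq⟩
      · obtain ⟨e₂, ht, heq⟩ := (mem_glueCover_inr (G₁ := G₁) (G₂ := G₂)).mp ha
        obtain ⟨j, hj⟩ := βr_glue_labeled (heq ▸ hlab)
        refine hubWalk₂ _ _ _ _ G₂.parent_root (G₂.connB e₂) ht (G₂.cover_root j e₂ hj)
          ?_ hlab
        intro s hs
        show C ∈ glueCover L₁ L₂ G₁ G₂ (some (Sum.inr s))
        exact (mem_glueCover_inr (G₁ := G₁) (G₂ := G₂)).mpr ⟨e₂, hs, heq⟩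
    · obtain ⟨x, hx⟩ := Quot.exists_rep C
      rcases x with e₁ | e₂
      · have hun : ∀ j, L₁.b j ≠ some e₁ := by
          intro j hj
          exact hlab ⟨j, by rw [KLI.glue_b_inl hj]; exact congrArg some hx⟩
        have hset : {t | C ∈ glueCover L₁ L₂ G₁ G₂ t} =
            (fun t => some (Sum.inl t)) '' {t | e₁ ∈ G₁.Cover t} := by
          ext a
          constructor
          · intro haa
            rcases a with _ | (t | t)
            · exact absurd haa hlab
            · obtain ⟨e₁', ht', heq⟩ := (mem_glueCover_inl (G₁ := G₁) (G₂ := G₂)).mp haa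
              have h2 := KLI.βl_singleton hun (heq.trans hx.symm)
              rw [Sum.inl.injEq] at h2
              exact ⟨t, h2 ▸ ht', rfl⟩
            · obtain ⟨e₂', ht', heq⟩ := (mem_glueCover_inr (G₁ := G₁) (G₂ := G₂)).mp haa
              have h2 := KLI.βl_singleton hun (heq.trans hx.symm)
              simp at h2
          · rintro ⟨t, ht, rfl⟩
            show C ∈ glueCover L₁ L₂ G₁ G₂ (some (Sum.inl t))
            exact (mem_glueCover_inl (G₁ := G₁) (G₂ := G₂)).mpr ⟨e₁, ht, hx⟩
        rw [hset]
        exact (G₁.connB e₁).map (sumHom₁ G₁.root G₁.parent G₂.root G₂.parent G₁.parent_root)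
      · have hun : ∀ j, L₂.b j ≠ some e₂ := by
          intro j hj
          exact hlab ⟨j, by rw [KLI.glue_b_inr hj]; exact congrArg some hx⟩
        have hset : {t | C ∈ glueCover L₁ L₂ G₁ G₂ t} =
            (fun t => some (Sum.inr t)) '' {t | e₂ ∈ G₂.Cover t} := by
          ext a
          constructor
          · intro haa
            rcases a with _ | (t | t)
            · exact absurd haa hlab
            · obtain ⟨e₁', ht', heq⟩ := (mem_glueCover_inl (G₁ := G₁) (G₂ := G₂)).mp haa
              have h2 := KLI.βr_singleton hun (heq.trans hx.symm)
              simp at h2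
            · obtain ⟨e₂', ht', heq⟩ := (mem_glueCover_inr (G₁ := G₁) (G₂ := G₂)).mp haa
              have h2 := KLI.βr_singleton hun (heq.trans hx.symm)
              rw [Sum.inr.injEq] at h2
              exact ⟨t, h2 ▸ ht', rfl⟩
          · rintro ⟨t, ht, rfl⟩
            show C ∈ glueCover L₁ L₂ G₁ G₂ (some (Sum.inr t))
            exact (mem_glueCover_inr (G₁ := G₁) (G₂ := G₂)).mpr ⟨e₂, ht, hx⟩
        rw [hset]
        exact (G₂.connB e₂).map (sumHom₂ G₁.root G₁.parent G₂.root G₂.parent G₂.parent_root)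
  · -- connR
    intro w
    by_cases hnone : w ∈ bagOf (glueCover L₁ L₂ G₁ G₂) none
    · -- hub at none
      have claim₁ : ∀ v₁, w = KLI.ρl L₁ L₂ v₁ → v₁ ∈ bagOf G₁.Cover G₁.root := by
        intro v₁ hv
        by_cases hrl : ∃ i, L₁.r i = some v₁
        · obtain ⟨i, hi⟩ := hrl
          exact G₁.bag_root i v₁ hi
        · push_neg at hrl
          obtain ⟨C₀, hlabC₀, hE₀⟩ := (mem_glueBag_none (G₁ := G₁) (G₂ := G₂)).mp hnone
          rcases KLI.glue_E_cases hE₀ with ⟨e₁', v₁', hE, hCeq, hweq⟩ | ⟨e₂', v₂', hE, hCeq, hweq⟩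
          · have h2 := KLI.ρl_singleton hrl (hweq.symm.trans hv)
            rw [Sum.inl.injEq] at h2
            subst h2
            obtain ⟨j₁, hj₁⟩ := βl_glue_labeled (hCeq ▸ hlabC₀)
            exact mem_bagOf.mpr ⟨e₁', G₁.cover_root j₁ e₁' hj₁, hE⟩
          · have h2 := KLI.ρl_singleton hrl (hweq.symm.trans hv)
            simp at h2
      have claim₂ : ∀ v₂, w = KLI.ρr L₁ L₂ v₂ → v₂ ∈ bagOf G₂.Cover G₂.root := by
        intro v₂ hv
        by_cases hrl : ∃ i, L₂.r i = some v₂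
        · obtain ⟨i, hi⟩ := hrl
          exact G₂.bag_root i v₂ hi
        · push_neg at hrl
          obtain ⟨C₀, hlabC₀, hE₀⟩ := (mem_glueBag_none (G₁ := G₁) (G₂ := G₂)).mp hnone
          rcases KLI.glue_E_cases hE₀ with ⟨e₁', v₁', hE, hCeq, hweq⟩ | ⟨e₂', v₂', hE, hCeq, hweq⟩
          · have h2 := KLI.ρr_singleton hrl (hweq.symm.trans hv)
            simp at h2
          · have h2 := KLI.ρr_singleton hrl (hweq.symm.trans hv)
            rw [Sum.inr.injEq] at h2
            subst h2
            obtain ⟨j₂, hj₂⟩ := βr_glue_labeled (hCeq ▸ hlabC₀)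
            exact mem_bagOf.mpr ⟨e₂', G₂.cover_root j₂ e₂' hj₂, hE⟩
      refine indConn_of_hub (h₀ := (none : Option (G₁.T ⊕ G₂.T))) hnone ?_
      rintro (_ | (t | t)) ha
      · exact ⟨SimpleGraph.Walk.nil, by
          intro x hx
          simp only [SimpleGraph.Walk.support_nil, List.mem_singleton] at hx
          subst hx; exact hnone⟩
      · obtain ⟨e₁, ht, hEw⟩ := (mem_glueBag_inl (G₁ := G₁) (G₂ := G₂)).mp ha
        by_cases hlabe : ∃ j, L₁.b j = some e₁
        · obtain ⟨j, hj⟩ := hlabe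
          refine hubWalk₁ _ _ _ _ G₁.parent_root (G₁.connB e₁) ht (G₁.cover_root j e₁ hj)
            ?_ hnone
          intro s hs
          show w ∈ bagOf (glueCover L₁ L₂ G₁ G₂) (some (Sum.inl s))
          exact (mem_glueBag_inl (G₁ := G₁) (G₂ := G₂)).mpr ⟨e₁, hs, hEw⟩
        · push_neg at hlabe
          rcases KLI.glue_E_cases hEw with ⟨e₁', v₁, hE, hCeq, hweq⟩ | ⟨e₂', v₂, hE, hCeq, hweq⟩
          · have h2 := KLI.βl_singleton hlabe hCeq.symm
            rw [Sum.inl.injEq] at h2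
            subst h2
            have hvroot := claim₁ v₁ hweq
            refine hubWalk₁ _ _ _ _ G₁.parent_root (G₁.connR v₁)
              (mem_bagOf.mpr ⟨e₁', ht, hE⟩) hvroot ?_ hnone
            intro s hs
            obtain ⟨e', he', hv⟩ := mem_bagOf.mp hs
            show w ∈ bagOf (glueCover L₁ L₂ G₁ G₂) (some (Sum.inl s))
            refine (mem_glueBag_inl (G₁ := G₁) (G₂ := G₂)).mpr ⟨e', he', ?_⟩
            rw [hweq]
            exact KLI.glue_E_inl hv
          · have h2 := KLI.βl_singleton hlabe hCeq.symm
            simp at h2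
      · obtain ⟨e₂, ht, hEw⟩ := (mem_glueBag_inr (G₁ := G₁) (G₂ := G₂)).mp ha
        by_cases hlabe : ∃ j, L₂.b j = some e₂
        · obtain ⟨j, hj⟩ := hlabe
          refine hubWalk₂ _ _ _ _ G₂.parent_root (G₂.connB e₂) ht (G₂.cover_root j e₂ hj)
            ?_ hnone
          intro s hs
          show w ∈ bagOf (glueCover L₁ L₂ G₁ G₂) (some (Sum.inr s))
          exact (mem_glueBag_inr (G₁ := G₁) (G₂ := G₂)).mpr ⟨e₂, hs, hEw⟩
        · push_neg at hlabe
          rcases KLI.glue_E_cases hEw with ⟨e₁', v₁, hE, hCeq, hweq⟩ | ⟨e₂', v₂, hE, hCeq, hweq⟩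
          · have h2 := KLI.βr_singleton hlabe hCeq.symm
            simp at h2
          · have h2 := KLI.βr_singleton hlabe hCeq.symm
            rw [Sum.inr.injEq] at h2
            subst h2
            have hvroot := claim₂ v₂ hweq
            refine hubWalk₂ _ _ _ _ G₂.parent_root (G₂.connR v₂)
              (mem_bagOf.mpr ⟨e₂', ht, hE⟩) hvroot ?_ hnone
            intro s hs
            obtain ⟨e', he', hv⟩ := mem_bagOf.mp hs
            show w ∈ bagOf (glueCover L₁ L₂ G₁ G₂) (some (Sum.inr s))
            refine (mem_glueBag_inr (G₁ := G₁) (G₂ := G₂)).mpr ⟨e', he', ?_⟩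
            rw [hweq]
            exact KLI.glue_E_inr hv
    · -- none not in the set: the set lives on one side
      obtain ⟨x, hx⟩ := Quot.exists_rep w
      rcases x with v₁ | v₂
      · have hrl : ∀ i, L₁.r i ≠ some v₁ := by
          intro i hi
          obtain ⟨e, ⟨j, hj⟩, hE⟩ := h₁ i v₁ hi
          exact hnone ((mem_glueBag_none (G₁ := G₁) (G₂ := G₂)).mpr ⟨KLI.βl L₁ L₂ e, ⟨j, KLI.glue_b_inl hj⟩,
            hx ▸ KLI.glue_E_inl hE⟩)
        have hset : {t | w ∈ bagOf (glueCover L₁ L₂ G₁ G₂) t} =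
            (fun t => some (Sum.inl t)) '' {t | v₁ ∈ bagOf G₁.Cover t} := by
          ext a
          constructor
          · intro haa
            rcases a with _ | (t | t)
            · exact absurd haa hnone
            · obtain ⟨e₁, ht, hEw⟩ := (mem_glueBag_inl (G₁ := G₁) (G₂ := G₂)).mp haa
              by_cases hlabe : ∃ j, L₁.b j = some e₁
              · exfalso
                obtain ⟨j, hj⟩ := hlabe
                exact hnone ((mem_glueBag_none (G₁ := G₁) (G₂ := G₂)).mpr
                  ⟨KLI.βl L₁ L₂ e₁, ⟨j, KLI.glue_b_inl hj⟩, hEw⟩)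
              · push_neg at hlabe
                rcases KLI.glue_E_cases hEw with
                  ⟨e₁', v₁', hE, hCeq, hweq⟩ | ⟨e₂', v₂', hE, hCeq, hweq⟩
                · have h2 := KLI.βl_singleton hlabe hCeq.symm
                  rw [Sum.inl.injEq] at h2
                  subst h2
                  have h3 := KLI.ρl_singleton hrl (hweq.symm.trans hx.symm)
                  rw [Sum.inl.injEq] at h3
                  subst h3
                  exact ⟨t, mem_bagOf.mpr ⟨e₁', ht, hE⟩, rfl⟩
                · have h2 := KLI.βl_singleton hlabe hCeq.symm
                  simp at h2
            · exfalso
              obtain ⟨e₂, ht, hEw⟩ := (mem_glueBag_inr (G₁ := G₁) (G₂ := G₂)).mp haa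
              by_cases hlabe : ∃ j, L₂.b j = some e₂
              · obtain ⟨j, hj⟩ := hlabe
                exact hnone ((mem_glueBag_none (G₁ := G₁) (G₂ := G₂)).mpr
                  ⟨KLI.βr L₁ L₂ e₂, ⟨j, KLI.glue_b_inr hj⟩, hEw⟩)
              · push_neg at hlabe
                rcases KLI.glue_E_cases hEw with
                  ⟨e₁', v₁', hE, hCeq, hweq⟩ | ⟨e₂', v₂', hE, hCeq, hweq⟩
                · have h2 := KLI.βr_singleton hlabe hCeq.symm
                  simp at h2
                · have h3 := KLI.ρl_singleton hrl (hweq.symm.trans hx.symm)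
                  simp at h3
          · rintro ⟨t, ht, rfl⟩
            obtain ⟨e', he', hv⟩ := mem_bagOf.mp ht
            show w ∈ bagOf (glueCover L₁ L₂ G₁ G₂) (some (Sum.inl t))
            exact (mem_glueBag_inl (G₁ := G₁) (G₂ := G₂)).mpr ⟨e', he', hx ▸ KLI.glue_E_inl hv⟩
        rw [hset]
        exact (G₁.connR v₁).map (sumHom₁ G₁.root G₁.parent G₂.root G₂.parent G₁.parent_root)
      · have hrl : ∀ i, L₂.r i ≠ some v₂ := by
          intro i hi
          rcases h₂ i v₂ hi with hsome | ⟨e, ⟨j, hj⟩, hE⟩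
          · obtain ⟨v₁', hv₁'⟩ := Option.isSome_iff_exists.mp hsome
            obtain ⟨e, ⟨j, hj⟩, hE⟩ := h₁ i v₁' hv₁'
            refine hnone ((mem_glueBag_none (G₁ := G₁) (G₂ := G₂)).mpr ⟨KLI.βl L₁ L₂ e, ⟨j, KLI.glue_b_inl hj⟩, ?_⟩)
            have : KLI.ρl L₁ L₂ v₁' = w := (KLI.ρl_eq_ρr hv₁' hi).trans hx
            exact this ▸ KLI.glue_E_inl hE
          · exact hnone ((mem_glueBag_none (G₁ := G₁) (G₂ := G₂)).mpr ⟨KLI.βr L₁ L₂ e, ⟨j, KLI.glue_b_inr hj⟩,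
              hx ▸ KLI.glue_E_inr hE⟩)
        have hset : {t | w ∈ bagOf (glueCover L₁ L₂ G₁ G₂) t} =
            (fun t => some (Sum.inr t)) '' {t | v₂ ∈ bagOf G₂.Cover t} := by
          ext a
          constructor
          · intro haa
            rcases a with _ | (t | t)
            · exact absurd haa hnone
            · exfalso
              obtain ⟨e₁, ht, hEw⟩ := (mem_glueBag_inl (G₁ := G₁) (G₂ := G₂)).mp haa
              by_cases hlabe : ∃ j, L₁.b j = some e₁
              · obtain ⟨j, hj⟩ := hlabe
                exact hnone ((mem_glueBag_none (G₁ := G₁) (G₂ := G₂)).mpr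
                  ⟨KLI.βl L₁ L₂ e₁, ⟨j, KLI.glue_b_inl hj⟩, hEw⟩)
              · push_neg at hlabe
                rcases KLI.glue_E_cases hEw with
                  ⟨e₁', v₁', hE, hCeq, hweq⟩ | ⟨e₂', v₂', hE, hCeq, hweq⟩
                · have h3 := KLI.ρr_singleton hrl (hweq.symm.trans hx.symm)
                  simp at h3
                · have h2 := KLI.βl_singleton hlabe hCeq.symm
                  simp at h2
            · obtain ⟨e₂, ht, hEw⟩ := (mem_glueBag_inr (G₁ := G₁) (G₂ := G₂)).mp haa
              by_cases hlabe : ∃ j, L₂.b j = some e₂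
              · exfalso
                obtain ⟨j, hj⟩ := hlabe
                exact hnone ((mem_glueBag_none (G₁ := G₁) (G₂ := G₂)).mpr
                  ⟨KLI.βr L₁ L₂ e₂, ⟨j, KLI.glue_b_inr hj⟩, hEw⟩)
              · push_neg at hlabe
                rcases KLI.glue_E_cases hEw with
                  ⟨e₁', v₁', hE, hCeq, hweq⟩ | ⟨e₂', v₂', hE, hCeq, hweq⟩
                · have h2 := KLI.βr_singleton hlabe hCeq.symm
                  simp at h2
                · have h2 := KLI.βr_singleton hlabe hCeq.symm
                  rw [Sum.inr.injEq] at h2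
                  subst h2
                  have h3 := KLI.ρr_singleton hrl (hweq.symm.trans hx.symm)
                  rw [Sum.inr.injEq] at h3
                  subst h3
                  exact ⟨t, mem_bagOf.mpr ⟨e₂', ht, hE⟩, rfl⟩
          · rintro ⟨t, ht, rfl⟩
            obtain ⟨e', he', hv⟩ := mem_bagOf.mp ht
            show w ∈ bagOf (glueCover L₁ L₂ G₁ G₂) (some (Sum.inr t))
            exact (mem_glueBag_inr (G₁ := G₁) (G₂ := G₂)).mpr ⟨e', he', hx ▸ KLI.glue_E_inr hv⟩
        rw [hset]
        exact (G₂.connR v₂).map (sumHom₂ G₁.root G₁.parent G₂.root G₂.parent G₂.parent_root)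
  · -- width
    rintro (_ | (t | t))
    · exact ncard_label_le ((L₁.glue L₂).b)
    · exact le_trans (Set.ncard_image_le (Set.toFinite _)) (G₁.width t)
    · exact le_trans (Set.ncard_image_le (Set.toFinite _)) (G₂.width t)
  · -- cover_root
    intro j C h
    exact ⟨j, h⟩
  · -- bag_root
    intro i w h
    rcases KLI.glue_r_cases h with ⟨v₁, hv₁, rfl⟩ | ⟨hn1, v₂, hv₂, rfl⟩
    · obtain ⟨e, ⟨j, hj⟩, hE⟩ := h₁ i v₁ hv₁
      exact (mem_glueBag_none (G₁ := G₁) (G₂ := G₂)).mpr ⟨KLI.βl L₁ L₂ e, ⟨j, KLI.glue_b_inl hj⟩, KLI.glue_E_inl hE⟩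
    · rcases h₂ i v₂ hv₂ with hsome | ⟨e, ⟨j, hj⟩, hE⟩
      · rw [hn1] at hsome
        simp at hsome
      · exact (mem_glueBag_none (G₁ := G₁) (G₂ := G₂)).mpr ⟨KLI.βr L₁ L₂ e, ⟨j, KLI.glue_b_inr hj⟩, KLI.glue_E_inr hE⟩
/-! ### the main induction -/

lemma KLI.glue_r_isSome {k : ℕ} (L₁ L₂ : KLI k) (i : ℕ) :
    ((L₁.glue L₂).r i).isSome ↔ (L₁.r i).isSome ∨ (L₂.r i).isSome := by
  show (match L₁.r i with
    | some v => some (Quot.mk (glueRelR L₁ L₂) (Sum.inl v))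
    | none => (L₂.r i).map fun v => Quot.mk (glueRelR L₁ L₂) (Sum.inr v)).isSome ↔ _
  cases h1 : L₁.r i with
  | some v => simp
  | none => cases h2 : L₂.r i <;> simp

lemma GuardF.union_isSome {k : ℕ} (g₁ g₂ : GuardF k) (i : ℕ) :
    ((g₁.union g₂).f i).isSome ↔ (g₁.f i).isSome ∨ (g₂.f i).isSome := by
  show ((g₁.f i).or (g₂.f i)).isSome ↔ _
  cases g₁.f i <;> simp

lemma guardKLI_r_isSome {k : ℕ} (f : GuardF k) (i : ℕ) :
    ((KLI.guardKLI f).r i).isSome ↔ (f.f i).isSome := by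
  rw [← GuardF.mem_dom]
  show (if h : i ∈ f.dom then some (⟨i, h⟩ : {i : ℕ // i ∈ f.dom}) else none).isSome ↔ _
  by_cases h : i ∈ f.dom <;> simp [h]

/-- full labelling hypothesis needed by `glueGood`, derived from real guards. -/
lemma h₁_of_guards {k : ℕ} (L : KLI k) (hg : L.realGuards)
    (hA : ∀ i, (L.r i).isSome ↔ (L.g.f i).isSome) :
    ∀ i v, L.r i = some v → ∃ e, (∃ j, L.b j = some e) ∧ L.I.E e v := by
  intro i v hv
  have hs : (L.g.f i).isSome := (hA i).mp (by rw [hv]; rfl)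
  obtain ⟨j, hj⟩ := Option.isSome_iff_exists.mp hs
  obtain ⟨v', e, hv', he, hE⟩ := hg i j hj
  rw [hv] at hv'
  obtain rfl : v = v' := Option.some_injective _ hv'
  exact ⟨e, ⟨j, he⟩, hE⟩

def GLIInv (k : ℕ) (L : KLI k) : Prop :=
  L.realGuards ∧ (∀ i, (L.r i).isSome ↔ (L.g.f i).isSome) ∧
    Nonempty (GoodDec k L.I L.r L.b)
theorem inv_of_GLI {k : ℕ} {L : KLI k} (h : GLI k L) : GLIInv k L := by
  induction h with
  | base L hR hB hA hguards =>
    exact ⟨hguards, hA, ⟨goodDec_of_fullyLabeled L.I L.r L.b hB⟩⟩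
  | removeR L X hGLI hmem ih =>
    obtain ⟨hg, hA, ⟨G⟩⟩ := ih
    refine ⟨?_, ?_, ⟨G.mono ?_ ?_⟩⟩
    · intro i j hj
      have hj' : (if i ∈ X then none else L.g.f i) = some j := hj
      by_cases hiX : i ∈ X
      · rw [if_pos hiX] at hj'; exact absurd hj' (by simp)
      · rw [if_neg hiX] at hj'
        obtain ⟨v, e, hv, he, hE⟩ := hg i j hj'
        refine ⟨v, e, ?_, he, hE⟩
        show (if i ∈ X then none else L.r i) = some v
        rw [if_neg hiX]; exact hv
    · intro i
      show (if i ∈ X then none else L.r i).isSome ↔ (if i ∈ X then none else L.g.f i).isSome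
      by_cases hiX : i ∈ X
      · simp [hiX]
      · simp only [if_neg hiX]; exact hA i
    · intro i v hv
      have hv' : (if i ∈ X then none else L.r i) = some v := hv
      by_cases hiX : i ∈ X
      · rw [if_pos hiX] at hv'; exact absurd hv' (by simp)
      · rw [if_neg hiX] at hv'; exact hv'
    · exact fun j e he => he
  | removeB L X hGLI hmem ih =>
    obtain ⟨hg, hA, ⟨G⟩⟩ := ih
    refine ⟨?_, hA, ⟨G.mono (fun i v hv => hv) ?_⟩⟩
    · intro i j hj
      obtain ⟨v, e, hv, he, hE⟩ := hg i j hj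
      have hjX : j ∉ X := fun hmemX => (hmem j hmemX).2 (GuardF.mem_img.mpr ⟨i, hj⟩)
      refine ⟨v, e, hv, ?_, hE⟩
      show (if j ∈ X then none else L.b j) = some e
      rw [if_neg hjX]; exact he
    · intro j e he
      have he' : (if j ∈ X then none else L.b j) = some e := he
      by_cases hjX : j ∈ X
      · rw [if_pos hjX] at he'; exact absurd he' (by simp)
      · rw [if_neg hjX] at he'; exact he'
  | trans L f hGLI htr ih =>
    obtain ⟨hg, hA, ⟨G⟩⟩ := ih
    obtain ⟨hne, hdom, himg⟩ := htr
    have hBfull : ∀ e : (KLI.guardKLI (k := k) f).I.B, ∃ j, (KLI.guardKLI f).b j = some e := by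
      rintro ⟨j, hj⟩
      refine ⟨j, ?_⟩
      show (if h : j ∈ f.img then some (⟨j, h⟩ : {j : Fin k // j ∈ f.img}) else none) = _
      rw [dif_pos hj]; rfl
    have G₁ := goodDec_of_fullyLabeled (KLI.guardKLI f).I (KLI.guardKLI f).r
      (KLI.guardKLI f).b hBfull
    have G₂ : GoodDec k (L.removeB (L.g.img ∩ f.img ∩ L.domB)).I
        (L.removeB (L.g.img ∩ f.img ∩ L.domB)).r (L.removeB (L.g.img ∩ f.img ∩ L.domB)).b := by
      refine G.mono (fun i v hv => hv) ?_
      intro j e he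
      have he' : (if j ∈ L.g.img ∩ f.img ∩ L.domB then none else L.b j) = some e := he
      by_cases hjX : j ∈ L.g.img ∩ f.img ∩ L.domB
      · rw [if_pos hjX] at he'; exact absurd he' (by simp)
      · rw [if_neg hjX] at he'; exact he'
    have h₁ : ∀ i v, (KLI.guardKLI (k := k) f).r i = some v →
        ∃ e, (∃ j, (KLI.guardKLI f).b j = some e) ∧ (KLI.guardKLI f).I.E e v := by
      intro i v hv
      have hv' : (if h : i ∈ f.dom then some (⟨i, h⟩ : {i : ℕ // i ∈ f.dom}) else none)
          = some v := hv
      by_cases hif : i ∈ f.dom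
      · rw [dif_pos hif] at hv'
        have hs : (f.f i).isSome := GuardF.mem_dom.mp hif
        have hj : f.f i = some ((f.f i).get hs) := (Option.some_get hs).symm
        have hjim : (f.f i).get hs ∈ f.img := GuardF.mem_img.mpr ⟨i, hj⟩
        refine ⟨⟨(f.f i).get hs, hjim⟩, ⟨(f.f i).get hs, ?_⟩, ?_⟩
        · show (if h : (f.f i).get hs ∈ f.img
            then some (⟨(f.f i).get hs, h⟩ : {j : Fin k // j ∈ f.img}) else none) = _
          rw [dif_pos hjim]; rfl
        · show f.f v.1 = some ((f.f i).get hs)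
          obtain rfl : (⟨i, hif⟩ : {i : ℕ // i ∈ f.dom}) = v := Option.some_injective _ hv'
          exact hj
      · rw [dif_neg hif] at hv'; exact absurd hv' (by simp)
    have h₂ : ∀ i v, (L.removeB (L.g.img ∩ f.img ∩ L.domB)).r i = some v →
        ((KLI.guardKLI (k := k) f).r i).isSome ∨
        ∃ e, (∃ j, (L.removeB (L.g.img ∩ f.img ∩ L.domB)).b j = some e) ∧
          (L.removeB (L.g.img ∩ f.img ∩ L.domB)).I.E e v := by
      intro i v hv
      by_cases hif : i ∈ f.dom
      · left
        show (if h : i ∈ f.dom then some (⟨i, h⟩ : {i : ℕ // i ∈ f.dom}) else none).isSome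
        rw [dif_pos hif]; rfl
      · right
        have hgs : (L.g.f i).isSome := (hA i).mp (by rw [show L.r i = some v from hv]; rfl)
        obtain ⟨j, hj⟩ := Option.isSome_iff_exists.mp hgs
        obtain ⟨v', e, hv', he, hE⟩ := hg i j hj
        have hv2 : L.r i = some v := hv
        rw [hv2] at hv'
        obtain rfl : v = v' := Option.some_injective _ hv'
        have hjX : j ∉ L.g.img ∩ f.img ∩ L.domB := by
          intro hmemX
          have hjf : j ∈ f.img := (Finset.mem_inter.mp (Finset.mem_inter.mp hmemX).1).2
          exact hif (GuardF.mem_dom.mpr (himg i j hj hjf))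
        refine ⟨e, ⟨j, ?_⟩, hE⟩
        show (if j ∈ L.g.img ∩ f.img ∩ L.domB then none else L.b j) = some e
        rw [if_neg hjX]; exact he
    obtain ⟨GG⟩ := glueGood (KLI.guardKLI f) (L.removeB (L.g.img ∩ f.img ∩ L.domB))
      G₁ G₂ h₁ h₂
    refine ⟨?_, ?_, ⟨GG⟩⟩
    · -- real guards for the transition
      intro i j hj
      have hj' : (f.f i).or (L.g.f i) = some j := hj
      cases hfi : f.f i with
      | some j' =>
        rw [hfi] at hj'
        have hjj : some j = some j' := hj'.symm
        have hjeq : j = j' := Option.some_injective _ hjj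
        subst hjeq
        have hif : i ∈ f.dom := GuardF.mem_dom.mpr (by rw [hfi]; rfl)
        have hjim : j ∈ f.img := GuardF.mem_img.mpr ⟨i, hfi⟩
        refine ⟨KLI.ρl _ _ ⟨i, hif⟩, KLI.βl _ _ ⟨j, hjim⟩, ?_, ?_, ?_⟩
        · refine KLI.glue_r_inl ?_
          show (if h : i ∈ f.dom then some (⟨i, h⟩ : {i : ℕ // i ∈ f.dom}) else none) = _
          rw [dif_pos hif]; rfl
        · refine KLI.glue_b_inl ?_
          show (if h : j ∈ f.img then some (⟨j, h⟩ : {j : Fin k // j ∈ f.img}) else none) = _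
          rw [dif_pos hjim]; rfl
        · exact KLI.glue_E_inl hfi
      | none =>
        rw [hfi] at hj'
        have hj2 : L.g.f i = some j := hj'
        obtain ⟨v, e, hv, he, hE⟩ := hg i j hj2
        have hjX : j ∉ L.g.img ∩ f.img ∩ L.domB := by
          intro hmemX
          have hjf : j ∈ f.img := (Finset.mem_inter.mp (Finset.mem_inter.mp hmemX).1).2
          have := himg i j hj2 hjf
          rw [hfi] at this
          exact absurd this (by simp)
        refine ⟨KLI.ρr _ _ v, KLI.βr _ _ e, KLI.glue_r_inr hv, KLI.glue_b_inr ?_,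
          KLI.glue_E_inr hE⟩
        show (if j ∈ L.g.img ∩ f.img ∩ L.domB then none else L.b j) = some e
        rw [if_neg hjX]; exact he
    · -- domain condition
      intro i
      show (((KLI.guardKLI f).glue (L.removeB (L.g.img ∩ f.img ∩ L.domB))).r i).isSome ↔
        ((f.union L.g).f i).isSome
      rw [KLI.glue_r_isSome, GuardF.union_isSome, guardKLI_r_isSome]
      have hrB : ((L.removeB (L.g.img ∩ f.img ∩ L.domB)).r i).isSome ↔ (L.g.f i).isSome := hA i
      rw [hrB]
  | glue L L' hGLI hGLI' hcompat ih ih' =>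
    obtain ⟨hg, hA, ⟨G⟩⟩ := ih
    obtain ⟨hg', hA', ⟨G'⟩⟩ := ih'
    have h₁ := h₁_of_guards L hg hA
    have h₂ : ∀ i v, L'.r i = some v →
        (L.r i).isSome ∨ ∃ e, (∃ j, L'.b j = some e) ∧ L'.I.E e v :=
      fun i v hv => Or.inr (h₁_of_guards L' hg' hA' i v hv)
    refine ⟨?_, ?_, glueGood L L' G G' h₁ h₂⟩
    · intro i j hj
      have hj' : (L.g.f i).or (L'.g.f i) = some j := hj
      cases hfi : L.g.f i with
      | some j' =>
        rw [hfi] at hj'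
        have hjj : some j = some j' := hj'.symm
        have hjeq : j = j' := Option.some_injective _ hjj
        subst hjeq
        obtain ⟨v, e, hv, he, hE⟩ := hg i j hfi
        exact ⟨KLI.ρl _ _ v, KLI.βl _ _ e, KLI.glue_r_inl hv, KLI.glue_b_inl he,
          KLI.glue_E_inl hE⟩
      | none =>
        rw [hfi] at hj'
        have hj2 : L'.g.f i = some j := hj'
        obtain ⟨v, e, hv, he, hE⟩ := hg' i j hj2
        exact ⟨KLI.ρr _ _ v, KLI.βr _ _ e, KLI.glue_r_inr hv, KLI.glue_b_inr he,
          KLI.glue_E_inr hE⟩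
    · intro i
      show ((L.glue L').r i).isSome ↔ ((L.g.union L'.g).f i).isSome
      rw [KLI.glue_r_isSome, GuardF.union_isSome, hA i, hA' i]

end
/-- For every guarded `k`-labeled incidence graph `L ∈ GLI^k`,
the underlying incidence graph belongs to `IEHW_k`. -/
theorem GLI_mem_IEHW (k : ℕ) (L : KLI k) (hL : GLI k L) : L.I ∈ IEHW k := by
  obtain ⟨-, -, ⟨G⟩⟩ := inv_of_GLI hL
  exact G.mem_IEHW
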